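/- arXiv:1809.00142 — 6 statements merged into one kernel-verified Lean document; each statement's English description precedes it below -/
import Mathlib

section
/- For every natural number n ≥ 2, the directed cycle C⃗_n on n vertices satisfies χ⃗_f(C⃗_n) = χ⃗*(C⃗_n) = χ⃗_c(C⃗_n) = n/(n−1). -/
open Finset

variable {V : Type*}

/-- `v :: l` forms a directed cycle of the digraph with arc relation `E`:
the vertices are pairwise distinct and each one has an arc to the next, cyclically. -/
def IsDicycle (E : V → V → Prop) (v : V) (l : List V) : Prop :=
  (v :: l).Nodup ∧ List.Chain E v (l ++ [v])

/-- The vertex set `A` induces an acyclic subdigraph of the digraph `E`: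
no directed cycle of `E` has all of its vertices in `A`. -/
def AcyclicOn (E : V → V → Prop) (A : Set V) : Prop :=
  ∀ v l, IsDicycle E v l → ¬ (∀ x ∈ v :: l, x ∈ A)

/-- The open arc of length 1 in `ℝ/pℤ` starting at (the image of) `a`. -/
def unitArc (p a : ℝ) : Set (AddCircle p) :=
  (fun x : ℝ => (x : AddCircle p)) '' Set.Ioo a (a + 1)

/-- An acyclic `p`-colouring of the digraph `E` : the preimage of every open arc
of length 1 induces an acyclic subdigraph. -/
def IsAcyclicColouring (E : V → V → Prop) (p : ℝ) (c : V → AddCircle p) : Prop :=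
  ∀ a : ℝ, AcyclicOn E (c ⁻¹' unitArc p a)

/-- The star dichromatic number of a digraph. -/
noncomputable def starDichromatic (E : V → V → Prop) : ℝ :=
  sInf {p : ℝ | 1 ≤ p ∧ ∃ c : V → AddCircle p, IsAcyclicColouring E p c}

/-- A weak circular `p`-colouring in the sense of Bokal et al. -/
def IsWeakCircularColouring (E : V → V → Prop) (p : ℝ) (c : V → AddCircle p) : Prop :=
  (∀ u w, E u w → c u = c w ∨
    ∃ r : ℝ, r ∈ Set.Ico (0 : ℝ) p ∧ (r : AddCircle p) = c w - c u ∧ 1 ≤ r) ∧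
  ∀ t : AddCircle p, AcyclicOn E (c ⁻¹' {t})

/-- The circular dichromatic number of a digraph. -/
noncomputable def circularDichromatic (E : V → V → Prop) : ℝ :=
  sInf {p : ℝ | 1 ≤ p ∧ ∃ c : V → AddCircle p, IsWeakCircularColouring E p c}

/-- The fractional dichromatic number: the optimal value of the covering linear
program over the acyclic vertex subsets. -/
noncomputable def fracDichromatic [Fintype V] [DecidableEq V] (E : V → V → Prop) : ℝ :=
  sInf {r : ℝ | ∃ x : Finset V → ℝ, (∀ A, 0 ≤ x A) ∧
    (∀ A : Finset V, x A ≠ 0 → AcyclicOn E ↑A) ∧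
    (∀ v : V, 1 ≤ ∑ A ∈ Finset.univ.filter (fun A : Finset V => v ∈ A), x A) ∧
    r = ∑ A : Finset V, x A}

/-- The cyclic interval `{i, i+1, ..., i+d-1}` in `ℤ/kℤ`. -/
def cycInterval (k : ℕ) (i : ZMod k) (d : ℕ) : Set (ZMod k) :=
  {j : ZMod k | ∃ t : ℕ, t < d ∧ j = i + (t : ZMod k)}

/-- An acyclic `(k,d)`-colouring of the digraph `E`. -/
def IsAcyclicKDColouring (E : V → V → Prop) (k d : ℕ) (c : V → ZMod k) : Prop :=
  ∀ i : ZMod k, AcyclicOn E (c ⁻¹' cycInterval k i d)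

/-- The dichromatic number: the least `k` such that the vertex set can be partitioned
into `k` classes each inducing an acyclic subdigraph. -/
noncomputable def dichromatic (E : V → V → Prop) : ℕ :=
  sInf {k : ℕ | ∃ c : V → Fin k, ∀ i : Fin k, AcyclicOn E (c ⁻¹' {i})}

/-- `v :: l` forms a cycle of the simple graph `G` (of length at least 3). -/
def IsGraphCycle (G : SimpleGraph V) (v : V) (l : List V) : Prop :=
  3 ≤ (v :: l).length ∧ (v :: l).Nodup ∧ List.Chain G.Adj v (l ++ [v])

/-- The vertex set `A` induces a forest (acyclic subgraph) in the simple graph `G`. -/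
def ForestOn (G : SimpleGraph V) (A : Set V) : Prop :=
  ∀ v l, IsGraphCycle G v l → ¬ (∀ x ∈ v :: l, x ∈ A)

/-- A `(k,d)`-tree-colouring of a graph. -/
def IsTreeColouring (G : SimpleGraph V) (k d : ℕ) (c : V → ZMod k) : Prop :=
  ∀ i : ZMod k, ForestOn G (c ⁻¹' cycInterval k i d)

/-- The circular vertex arboricity of a graph. -/
noncomputable def circularVertexArboricity (G : SimpleGraph V) : ℝ :=
  sInf {r : ℝ | ∃ k d : ℕ, 1 ≤ d ∧ d ≤ k ∧
    (∃ c : V → ZMod k, IsTreeColouring G k d c) ∧ r = (k : ℝ) / d}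

/-- `E` is an orientation of the simple graph `G`: for each edge exactly one of the
two possible arcs is present, and there are no other arcs. -/
def IsOrientation (G : SimpleGraph V) (E : V → V → Prop) : Prop :=
  ∀ u w, ((E u w ∨ E w u) ↔ G.Adj u w) ∧ ¬ (E u w ∧ E w u)

/-- The star dichromatic number of a graph: the maximum over all orientations. -/
noncomputable def starDichromaticGraph (G : SimpleGraph V) : ℝ :=
  sSup {r : ℝ | ∃ E : V → V → Prop, IsOrientation G E ∧ r = starDichromatic E}

/-- The fractional dichromatic number of a graph: the maximum over all orientations. -/
noncomputable def fracDichromaticGraph [Fintype V] [DecidableEq V] (G : SimpleGraph V) : ℝ :=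
  sSup {r : ℝ | ∃ E : V → V → Prop, IsOrientation G E ∧ r = fracDichromatic E}

/-- The fractional chromatic number of a graph: the optimal value of the covering
linear program over the independent vertex subsets. -/
noncomputable def fractionalChromatic [Fintype V] [DecidableEq V] (G : SimpleGraph V) : ℝ :=
  sInf {r : ℝ | ∃ x : Finset V → ℝ, (∀ A, 0 ≤ x A) ∧
    (∀ A : Finset V, x A ≠ 0 → ∀ u ∈ A, ∀ w ∈ A, ¬ G.Adj u w) ∧
    (∀ v : V, 1 ≤ ∑ A ∈ Finset.univ.filter (fun A : Finset V => v ∈ A), x A) ∧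
    r = ∑ A : Finset V, x A}

/-- A `(k,d)`-colouring of a graph in the sense of Vince: colours of adjacent vertices
have circular `k`-distance at least `d`. -/
def IsVinceColouring (G : SimpleGraph V) (k d : ℕ) (c : V → ZMod k) : Prop :=
  ∀ u w, G.Adj u w → d ≤ (c u - c w).val ∧ d ≤ (c w - c u).val

/-- Vince's star (circular) chromatic number of a graph. -/
noncomputable def starChromatic (G : SimpleGraph V) : ℝ :=
  sInf {r : ℝ | ∃ k d : ℕ, 1 ≤ d ∧ d ≤ k ∧
    (∃ c : V → ZMod k, IsVinceColouring G k d c) ∧ r = (k : ℝ) / d}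

/-- The circulant digraph `C⃗(k,d)` on `ℤ/kℤ`: each vertex `i` has the outgoing arcs
`(i, i+d), (i, i+d+1), …, (i, i+k-1)`. -/
def circulantDigraph (k d : ℕ) : ZMod k → ZMod k → Prop :=
  fun i j => ∃ t : ℕ, d ≤ t ∧ t < k ∧ j = i + (t : ZMod k)

/-- The directed cycle `C⃗_n` on `ℤ/nℤ`. -/
def dirCycle (n : ℕ) : ZMod n → ZMod n → Prop :=
  fun i j => j = i + 1

/-- The digraph `D^s` obtained from `D` by adding a dominating source `none`. -/
def addSource (E : V → V → Prop) : Option V → Option V → Prop :=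
  fun a b => match a, b with
  | none, some _ => True
  | some u, some w => E u w
  | _, none => False

/-- The wheel graph `W_k`: a cycle on `ℤ/kℤ` together with a hub `none` adjacent to
every cycle vertex. -/
def wheelGraph (k : ℕ) : SimpleGraph (Option (ZMod k)) :=
  SimpleGraph.fromRel (fun a b => match a, b with
    | none, some _ => True
    | some i, some j => j = i + 1
    | _, none => False)

namespace Stmt11aux

lemma chain_map (n k : ℕ) (v : ZMod n) :
    List.Chain (dirCycle n) v ((List.range k).map (fun t => v + ((t+1 : ℕ) : ZMod n))) := by
  induction k generalizing v with
  | zero => simp; exact List.isChain_singleton v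
  | succ k ih =>
    rw [List.range_succ_eq_map, List.map_cons, List.map_map]
    have h0 : v + ((0+1 : ℕ) : ZMod n) = v + 1 := by norm_num
    have h1 : (fun t => v + ((t+1:ℕ) : ZMod n)) ∘ Nat.succ
        = (fun t => (v+1) + ((t+1:ℕ) : ZMod n)) := by
      funext t
      show v + ((t+1+1 : ℕ) : ZMod n) = (v+1) + ((t+1:ℕ) : ZMod n)
      push_cast; ring
    rw [h0, h1]
    exact List.Chain.cons rfl (ih (v+1))

lemma chain_get {n : ℕ} : ∀ (l : List (ZMod n)) (v : ZMod n), List.Chain (dirCycle n) v l →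
    ∀ i (h : i < l.length), l[i] = v + ((i + 1 : ℕ) : ZMod n) := by
  intro l
  induction l with
  | nil => intro v _ i h; simp at h
  | cons a l ih =>
    intro v hch i h
    rcases List.chain_cons.mp hch with ⟨h1, h2⟩
    have h1' : a = v + 1 := h1
    cases i with
    | zero => simpa using h1'
    | succ i =>
      have hrec := ih a h2 i (by simpa using h)
      rw [List.getElem_cons_succ, hrec, h1']
      push_cast; ring

def canList (n : ℕ) : List (ZMod n) := (List.range (n-1)).map (fun t => ((t+1 : ℕ) : ZMod n))

lemma canCycle {n : ℕ} [NeZero n] : IsDicycle (dirCycle n) 0 (canList n) := by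
  obtain ⟨m, rfl⟩ : ∃ m, n = m + 1 :=
    ⟨n - 1, (Nat.succ_pred_eq_of_pos (Nat.pos_of_ne_zero (NeZero.ne n))).symm⟩
  constructor
  · rw [List.nodup_cons]
    constructor
    · intro hmem
      obtain ⟨t, ht, heq⟩ := List.mem_map.mp hmem
      have htlt : t + 1 < m + 1 := by simpa using List.mem_range.mp ht
      have := congrArg ZMod.val heq
      rw [ZMod.val_cast_of_lt htlt, ZMod.val_zero] at this
      omega
    · refine List.Nodup.map_on ?_ List.nodup_range
      intro x hx y hy hxy
      have hx' : x + 1 < m + 1 := by simpa using List.mem_range.mp hx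
      have hy' : y + 1 < m + 1 := by simpa using List.mem_range.mp hy
      have := congrArg ZMod.val hxy
      rwa [ZMod.val_cast_of_lt hx', ZMod.val_cast_of_lt hy', Nat.add_right_cancel_iff] at this
  · have he : canList (m+1) ++ [(0 : ZMod (m+1))] =
        (List.range (m+1)).map (fun t => (0 : ZMod (m+1)) + ((t+1 : ℕ) : ZMod (m+1))) := by
      rw [List.range_succ, List.map_append]
      simp [canList]
    rw [he]
    exact chain_map (m+1) (m+1) 0

lemma dicycle_mem {n : ℕ} [NeZero n] {v : ZMod n} {l : List (ZMod n)}
    (h : IsDicycle (dirCycle n) v l) (x : ZMod n) : x ∈ v :: l := by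
  obtain ⟨hnd, hch⟩ := h
  have hlen : l.length + 1 ≤ n := by
    have := List.Nodup.length_le_card hnd
    simpa [ZMod.card] using this
  have hvl : (l ++ [v])[l.length]'(by simp) = v + ((l.length + 1 : ℕ) : ZMod n) :=
    chain_get _ _ hch _ (by simp)
  have hv : (l ++ [v])[l.length]'(by simp) = v := by simp
  have hz : ((l.length + 1 : ℕ) : ZMod n) = 0 := left_eq_add.mp (hv.symm.trans hvl)
  have hdvd : n ∣ l.length + 1 := (ZMod.natCast_eq_zero_iff _ _).mp hz
  have hL : l.length + 1 = n := Nat.le_antisymm hlen (Nat.le_of_dvd (Nat.succ_pos _) hdvd)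
  obtain ⟨t, ht⟩ : ∃ t, (x - v).val = t := ⟨_, rfl⟩
  have htlt : t < n := ht ▸ ZMod.val_lt _
  have hxv : v + (t : ZMod n) = x := by rw [← ht, ZMod.natCast_val, ZMod.cast_id]; ring
  cases t with
  | zero =>
    have h0 : x - v = 0 := (ZMod.val_eq_zero _).mp ht
    have : x = v := by rwa [sub_eq_zero] at h0
    simp [this]
  | succ s =>
    have hs : s < l.length := by omega
    have hgs : l[s] = v + ((s + 1 : ℕ) : ZMod n) := by
      have := chain_get _ _ hch s (by simp; omega)
      rwa [List.getElem_append_left hs] at this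
    have hmem : l[s] ∈ l := List.getElem_mem _
    rw [hgs] at hmem
    rw [← hxv]
    exact List.mem_cons_of_mem _ hmem

lemma acyclic_iff {n : ℕ} [NeZero n] (A : Set (ZMod n)) :
    AcyclicOn (dirCycle n) A ↔ ¬ ∀ x, x ∈ A := by
  constructor
  · intro h hall
    exact h 0 (canList n) canCycle (fun x _ => hall x)
  · intro h v l hd hall
    exact h (fun x => hall x (dicycle_mem hd x))


open Finset

variable {n : ℕ} [NeZero n]

lemma nreal (hn : 2 ≤ n) : (1:ℝ) ≤ (n:ℝ) - 1 := by
  have : (2:ℝ) ≤ (n:ℝ) := by exact_mod_cast hn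
  linarith

lemma qgt (hn : 2 ≤ n) : 1 < (n:ℝ)/((n:ℝ)-1) := by
  have h1 := nreal hn
  rw [lt_div_iff₀ (by linarith)]
  linarith

lemma qmul (hn : 2 ≤ n) : ((n:ℝ)/((n:ℝ)-1)) * ((n:ℝ)-1) = (n:ℝ) := by
  have h1 := nreal hn
  field_simp

lemma star_mem (hn : 2 ≤ n) :
    ∃ c : ZMod n → AddCircle ((n:ℝ)/((n:ℝ)-1)),
      IsAcyclicColouring (dirCycle n) ((n:ℝ)/((n:ℝ)-1)) c := by
  have h1 := nreal hn
  have hq1 := qgt hn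
  have hqm := qmul hn
  refine ⟨fun v => (((v.val : ℝ)/((n:ℝ)-1) : ℝ) : AddCircle ((n:ℝ)/((n:ℝ)-1))), ?_⟩
  intro a
  rw [acyclic_iff]
  intro hall
  have hall' : ∀ v : ZMod n, ∃ y, y ∈ Set.Ioo a (a+1) ∧ ((y:ℝ) : AddCircle ((n:ℝ)/((n:ℝ)-1)))
      = (((v.val : ℝ)/((n:ℝ)-1) : ℝ) : AddCircle ((n:ℝ)/((n:ℝ)-1))) := by
    intro v
    obtain ⟨y, hy1, hy2⟩ := hall v
    exact ⟨y, hy1, hy2⟩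
  choose y hy hyc using hall'
  have hk : ∀ v, ∃ k : ℤ, k • ((n:ℝ)/((n:ℝ)-1)) = y v - (v.val : ℝ)/((n:ℝ)-1) := by
    intro v
    rw [← AddCircle.coe_eq_zero_iff]
    rw [AddCircle.coe_sub, hyc, sub_self]
  choose k hkk using hk
  have hyv : ∀ v, y v = (v.val : ℝ)/((n:ℝ)-1) + (k v : ℝ) * ((n:ℝ)/((n:ℝ)-1)) := by
    intro v
    have := hkk v
    rw [zsmul_eq_mul] at this
    linarith
  obtain ⟨v0, -, hmin⟩ := Finset.exists_min_image Finset.univ y Finset.univ_nonempty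
  set F : ZMod n → ℤ := fun v => ((v.val : ℤ) - (v0.val : ℤ)) + (k v - k v0) * n with hFdef
  have hFval : ∀ v, (F v : ℝ) = (y v - y v0) * ((n:ℝ)-1) := by
    intro v
    rw [hFdef]
    push_cast
    rw [hyv v, hyv v0]
    have hne : (n:ℝ) - 1 ≠ 0 := by linarith
    field_simp
    ring
  have hmapsto : ∀ v, F v ∈ Finset.Ico (0:ℤ) ((n:ℤ)-1) := by
    intro v
    rw [Finset.mem_Ico]
    constructor
    · have : (0:ℝ) ≤ (F v : ℝ) := by
        rw [hFval v]
        have := hmin v (Finset.mem_univ v)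
        nlinarith
      exact_mod_cast this
    · have : (F v : ℝ) < ((n:ℤ)-1 : ℤ) := by
        push_cast
        rw [hFval v]
        have h2 := (hy v).2
        have h3 := (hy v0).1
        nlinarith
      exact_mod_cast this
  have hinj : ((Finset.univ : Finset (ZMod n)) : Set (ZMod n)).InjOn F := by
    intro u _ w _ huw
    rw [hFdef] at huw
    have h2 : ((u.val:ℤ) - w.val) = (k w - k u) * n := by linear_combination huw
    have hu := ZMod.val_lt u
    have hw := ZMod.val_lt w
    have hu' : (u.val:ℤ) < n := by exact_mod_cast hu
    have hw' : (w.val:ℤ) < n := by exact_mod_cast hw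
    have hn0 : (0:ℤ) < n := by exact_mod_cast Nat.pos_of_ne_zero (NeZero.ne n)
    have he : k w - k u = 0 := by nlinarith [Int.ofNat_nonneg u.val, Int.ofNat_nonneg w.val]
    rw [he, zero_mul, sub_eq_zero] at h2
    have : u.val = w.val := by exact_mod_cast h2
    rw [← ZMod.natCast_zmod_val u, ← ZMod.natCast_zmod_val w, this]
  have hcard := Finset.card_le_card_of_injOn F (fun v _ => hmapsto v) hinj
  rw [Finset.card_univ, ZMod.card, Int.card_Ico] at hcard
  omega

lemma star_lb (hn : 2 ≤ n) {p : ℝ} (hp1 : 1 ≤ p) (c : ZMod n → AddCircle p)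
    (hc : IsAcyclicColouring (dirCycle n) p c) : (n:ℝ)/((n:ℝ)-1) ≤ p := by
  by_contra hlt
  push_neg at hlt
  have h1 := nreal hn
  have hp0 : (0:ℝ) < p := by linarith
  have hnR : (0:ℝ) < (n:ℝ) := by positivity
  haveI : Fact (0 < p) := ⟨hp0⟩
  set x : ZMod n → ℝ := fun v => ((AddCircle.equivIco p 0 (c v) : ℝ)) with hxdef
  have hx : ∀ v, 0 ≤ x v ∧ x v < p := by
    intro v
    have := (AddCircle.equivIco p 0 (c v)).2
    simp only [Set.mem_Ico, zero_add] at this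
    exact this
  have hxc : ∀ v, ((x v : ℝ) : AddCircle p) = c v :=
    fun v => (AddCircle.equivIco p 0).symm_apply_apply (c v)
  set S : Finset ℝ := Finset.image x Finset.univ with hSdef
  set l : List ℝ := Finset.sort S (· ≤ ·) with hldef
  set m : ℕ := l.length with hmdef
  have hlS : l.length = S.card := Finset.length_sort _
  have hm1 : 1 ≤ m := by
    rw [hmdef, hlS]
    exact Finset.card_pos.mpr ⟨x 0, Finset.mem_image_of_mem x (Finset.mem_univ 0)⟩
  have hmn : m ≤ n := by
    rw [hmdef, hlS]
    calc S.card ≤ (Finset.univ : Finset (ZMod n)).card := Finset.card_image_le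
    _ = n := by rw [Finset.card_univ, ZMod.card]
  set f : ℕ → ℝ := fun i => l.getD i 0 with hfdef
  have hfget : ∀ i (h : i < m), f i = l[i] := fun i h => List.getD_eq_getElem l 0 h
  have hfmem : ∀ i, i < m → f i ∈ S := by
    intro i h
    rw [hfget i h]
    exact (Finset.mem_sort _).mp (List.getElem_mem _)
  have hSf : ∀ y ∈ S, ∃ i, ∃ h : i < m, f i = y := by
    intro y hy
    have : y ∈ l := (Finset.mem_sort _).mpr hy
    obtain ⟨i, hi, he⟩ := List.getElem_of_mem this
    exact ⟨i, hi, by rw [hfget i hi]; exact he⟩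
  have hmono : ∀ i j, i ≤ j → j < m → f i ≤ f j := by
    intro i j hij hj
    rcases eq_or_lt_of_le hij with rfl | hij'
    · exact le_refl _
    · rw [hfget i (lt_of_le_of_lt hij hj), hfget j hj]
      exact List.Pairwise.rel_get_of_lt (Finset.pairwise_sort (s := S) (· ≤ ·)) hij'
  have hbounds : ∀ i, i < m → 0 ≤ f i ∧ f i < p := by
    intro i h
    obtain ⟨v, -, hv⟩ := Finset.mem_image.mp (hfmem i h)
    rw [← hv]
    exact hx v
  have h2 : p * ((n:ℝ)-1) < n := (lt_div_iff₀ (by linarith)).mp hlt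
  have hkey : p - p/(n:ℝ) < 1 := by
    rw [sub_lt_iff_lt_add, ← sub_lt_iff_lt_add', lt_div_iff₀ hnR]
    nlinarith [h2]
  have hpn0 : 0 < p / (n:ℝ) := by positivity
  have hsum : ∑ i ∈ Finset.range (m-1), (f (i+1) - f i) = f (m-1) - f 0 :=
    Finset.sum_range_sub f (m-1)
  have hgap : (p/(n:ℝ) ≤ p - f (m-1) + f 0) ∨ ∃ j, j < m-1 ∧ p/(n:ℝ) ≤ f (j+1) - f j := by
    by_contra hcon
    push_neg at hcon
    obtain ⟨hG, hg⟩ := hcon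
    have hsle := Finset.sum_le_card_nsmul (Finset.range (m-1)) (fun i => f (i+1) - f i)
      (p/(n:ℝ)) (fun i hi => le_of_lt (hg i (Finset.mem_range.mp hi)))
    rw [Finset.card_range, nsmul_eq_mul] at hsle
    have hm1R : ((m-1:ℕ):ℝ) = (m:ℝ) - 1 := by
      push_cast [hm1]
      ring
    rw [hm1R] at hsle
    have hmR : (m:ℝ) ≤ (n:ℝ) := by exact_mod_cast hmn
    have he1 : p/(n:ℝ) + ((m:ℝ)-1) * (p/(n:ℝ)) = (m:ℝ) * (p/(n:ℝ)) := by ring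
    have he2 : (m:ℝ) * (p/(n:ℝ)) ≤ (n:ℝ) * (p/(n:ℝ)) :=
      mul_le_mul_of_nonneg_right hmR (le_of_lt hpn0)
    have he3 : (n:ℝ) * (p/(n:ℝ)) = p := by field_simp
    linarith
  obtain ⟨s, L, hL1, hcov⟩ : ∃ s L, L < 1 ∧
      ∀ v, (s ≤ x v ∧ x v ≤ s + L) ∨ (s ≤ x v + p ∧ x v + p ≤ s + L) := by
    rcases hgap with hG | ⟨j, hj, hgj⟩
    · refine ⟨f 0, f (m-1) - f 0, by linarith, ?_⟩
      intro v
      obtain ⟨i, hi, hfi⟩ := hSf (x v) (Finset.mem_image_of_mem x (Finset.mem_univ v))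
      left
      constructor
      · rw [← hfi]; exact hmono 0 i (Nat.zero_le _) hi
      · rw [← hfi]
        have := hmono i (m-1) (by omega) (by omega)
        linarith
    · refine ⟨f (j+1), f j + p - f (j+1), by linarith, ?_⟩
      intro v
      obtain ⟨i, hi, hfi⟩ := hSf (x v) (Finset.mem_image_of_mem x (Finset.mem_univ v))
      by_cases hij : j + 1 ≤ i
      · left
        constructor
        · rw [← hfi]; exact hmono (j+1) i hij hi
        · have hip := (hbounds i hi).2
          have hj0 := (hbounds j (by omega)).1
          rw [← hfi]
          linarith
      · push_neg at hij
        right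
        constructor
        · have hA := (hbounds (j+1) (by omega)).2
          have hB := (hx v).1
          linarith
        · have hC := hmono i j (by omega) (by omega)
          rw [← hfi]
          linarith
  obtain ⟨a, hadef⟩ : ∃ a : ℝ, a = s - (1 - L)/2 := ⟨_, rfl⟩
  have hmemarc : ∀ v, c v ∈ unitArc p a := by
    intro v
    rcases hcov v with ⟨hA, hB⟩ | ⟨hA, hB⟩
    · have hmem : x v ∈ Set.Ioo a (a+1) :=
        Set.mem_Ioo.mpr ⟨by rw [hadef]; linarith, by rw [hadef]; linarith⟩
      have h3 := Set.mem_image_of_mem (fun y : ℝ => (y : AddCircle p)) hmem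
      rwa [hxc v] at h3
    · have hmem : x v + p ∈ Set.Ioo a (a+1) :=
        Set.mem_Ioo.mpr ⟨by rw [hadef]; linarith, by rw [hadef]; linarith⟩
      have h3 := Set.mem_image_of_mem (fun y : ℝ => (y : AddCircle p)) hmem
      have he : ((x v + p : ℝ) : AddCircle p) = c v := by
        rw [AddCircle.coe_add_period]
        exact hxc v
      rwa [he] at h3
  exact (acyclic_iff _).mp (hc a) (fun v => Set.mem_preimage.mpr (hmemarc v))

lemma circ_mem (hn : 2 ≤ n) :
    ∃ c : ZMod n → AddCircle ((n:ℝ)/((n:ℝ)-1)),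
      (∀ u w, dirCycle n u w → c u = c w ∨
        ∃ r : ℝ, r ∈ Set.Ico (0 : ℝ) ((n:ℝ)/((n:ℝ)-1)) ∧
          ((r:ℝ) : AddCircle ((n:ℝ)/((n:ℝ)-1))) = c w - c u ∧ 1 ≤ r) ∧
      ∀ t : AddCircle ((n:ℝ)/((n:ℝ)-1)), AcyclicOn (dirCycle n) (c ⁻¹' {t}) := by
  haveI : Fact (1 < n) := ⟨hn⟩
  have h1 := nreal hn
  have hq1 := qgt hn
  have hqm := qmul hn
  refine ⟨fun v => (((v.val : ℝ)) : AddCircle ((n:ℝ)/((n:ℝ)-1))), ?_, ?_⟩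
  · intro u w huw
    right
    refine ⟨1, Set.mem_Ico.mpr ⟨by norm_num, hq1⟩, ?_, le_refl 1⟩
    subst huw
    have hkey : ∃ k : ℤ, k • ((n:ℝ)/((n:ℝ)-1)) = ((u+1 : ZMod n).val : ℝ) - (u.val : ℝ) - 1 := by
      have hulow := ZMod.val_lt u
      have hv : (u+1 : ZMod n).val = (u.val + 1) % n := by
        rw [ZMod.val_add, ZMod.val_one]
      by_cases hcase : u.val + 1 < n
      · refine ⟨0, ?_⟩
        rw [zero_zsmul, hv, Nat.mod_eq_of_lt hcase]
        push_cast
        ring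
      · have hc2 : u.val + 1 = n := by omega
        refine ⟨-(((n:ℕ):ℤ)-1), ?_⟩
        rw [hv, hc2, Nat.mod_self]
        have hcast : (u.val:ℝ) = (n:ℝ) - 1 := by
          have h3 : ((u.val + 1 : ℕ) : ℝ) = (n : ℝ) := by rw [hc2]
          push_cast at h3
          linarith
        rw [zsmul_eq_mul, hcast]
        push_cast
        linear_combination (-(1:ℝ)) * hqm
    obtain ⟨k, hk⟩ := hkey
    have h0 : ((((u+1 : ZMod n).val : ℝ) - (u.val : ℝ) - 1 : ℝ) : AddCircle ((n:ℝ)/((n:ℝ)-1))) = 0 :=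
      (AddCircle.coe_eq_zero_iff _).mpr ⟨k, hk⟩
    rw [AddCircle.coe_sub] at h0
    have h5 := sub_eq_zero.mp h0
    rw [AddCircle.coe_sub] at h5
    exact h5.symm
  · intro t
    rw [acyclic_iff]
    intro hall
    have h0 := hall 0
    have h1' := hall 1
    simp only [Set.mem_preimage, Set.mem_singleton_iff] at h0 h1'
    have he := h1'.trans h0.symm
    rw [ZMod.val_one, ZMod.val_zero] at he
    norm_num at he
    obtain ⟨k, hk⟩ := AddSubgroup.mem_zmultiples_iff.mp he
    rw [zsmul_eq_mul] at hk
    rcases le_or_gt k 0 with hk0 | hk0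
    · have : (k:ℝ) ≤ 0 := by exact_mod_cast hk0
      nlinarith
    · have : (1:ℝ) ≤ (k:ℝ) := by exact_mod_cast hk0
      nlinarith

lemma circ_lb (hn : 2 ≤ n) {p : ℝ} (hp1 : 1 ≤ p) (c : ZMod n → AddCircle p)
    (hc1 : ∀ u w, dirCycle n u w → c u = c w ∨
      ∃ r : ℝ, r ∈ Set.Ico (0 : ℝ) p ∧ ((r:ℝ) : AddCircle p) = c w - c u ∧ 1 ≤ r)
    (hc2 : ∀ t : AddCircle p, AcyclicOn (dirCycle n) (c ⁻¹' {t})) :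
    (n:ℝ)/((n:ℝ)-1) ≤ p := by
  have h1 := nreal hn
  have hp0 : (0:ℝ) < p := by linarith
  have hd : ∀ i : ZMod n, ∃ r : ℝ, 0 ≤ r ∧ r < p ∧ ((r:ℝ) : AddCircle p) = c (i+1) - c i ∧
      (1 ≤ r ∨ (r = 0 ∧ c i = c (i+1))) := by
    intro i
    rcases hc1 i (i+1) rfl with heq | ⟨r, hr1, hr2, hr3⟩
    · refine ⟨0, le_refl 0, hp0, ?_, Or.inr ⟨rfl, heq⟩⟩
      rw [heq, sub_self]
      norm_num
    · exact ⟨r, (Set.mem_Ico.mp hr1).1, (Set.mem_Ico.mp hr1).2, hr2, Or.inl hr3⟩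
  choose d hd0 hdp hdc hdor using hd
  have hsum0 : ((∑ i : ZMod n, d i : ℝ) : AddCircle p) = 0 := by
    calc ((∑ i : ZMod n, d i : ℝ) : AddCircle p)
        = ∑ i : ZMod n, ((d i : ℝ) : AddCircle p) :=
          map_sum (QuotientAddGroup.mk' (AddSubgroup.zmultiples p)) d Finset.univ
      _ = ∑ i : ZMod n, (c (i+1) - c i) := Finset.sum_congr rfl (fun i _ => hdc i)
      _ = (∑ i : ZMod n, c (i+1)) - ∑ i : ZMod n, c i := Finset.sum_sub_distrib _ _
      _ = 0 := by
          rw [Fintype.sum_equiv (Equiv.addRight (1 : ZMod n)) (fun i => c (i+1)) c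
            (fun i => rfl)]
          exact sub_self _
  obtain ⟨k, hk⟩ := (AddCircle.coe_eq_zero_iff _).mp hsum0
  rw [zsmul_eq_mul] at hk
  by_cases hall : ∀ i, d i = 0
  · exfalso
    have hstep : ∀ i : ZMod n, c i = c (i+1) := by
      intro i
      rcases hdor i with h | ⟨-, h⟩
      · exfalso; rw [hall i] at h; linarith
      · exact h
    have hnat : ∀ m : ℕ, c (m : ZMod n) = c 0 := by
      intro m
      induction m with
      | zero => norm_num
      | succ m ih => push_cast; rw [← hstep (m : ZMod n)]; exact ih
    have hconst : ∀ i : ZMod n, c i = c 0 := by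
      intro i
      have := hnat i.val
      rwa [ZMod.natCast_zmod_val] at this
    exact (acyclic_iff _).mp (hc2 (c 0))
      (fun v => by simp [Set.mem_preimage, Set.mem_singleton_iff, hconst v])
  · push_neg at hall
    obtain ⟨i0, hi0⟩ := hall
    set T := Finset.univ.filter (fun i : ZMod n => d i ≠ 0) with hT
    have hTne : T.Nonempty := ⟨i0, by simp [hT, hi0]⟩
    have hTm1 : 1 ≤ T.card := Finset.card_pos.mpr hTne
    have hTmn : T.card ≤ n := by
      calc T.card ≤ (Finset.univ : Finset (ZMod n)).card := Finset.card_filter_le _ _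
        _ = n := by rw [Finset.card_univ, ZMod.card]
    have hsumT : ∑ i ∈ T, d i = ∑ i : ZMod n, d i := Finset.sum_filter_ne_zero _
    have hge : (T.card : ℝ) ≤ ∑ i ∈ T, d i := by
      have hone : ∀ i ∈ T, 1 ≤ d i := by
        intro i hi
        rcases hdor i with h | ⟨h, -⟩
        · exact h
        · exfalso
          exact (Finset.mem_filter.mp hi).2 h
      have := Finset.card_nsmul_le_sum T d 1 hone
      simpa using this
    have hlt2 : ∑ i ∈ T, d i < (T.card : ℝ) * p := by
      have := Finset.sum_lt_sum_of_nonempty hTne (fun i _ => hdp i)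
      simpa [Finset.sum_const, nsmul_eq_mul] using this
    have hkp : (k:ℝ) * p = ∑ i ∈ T, d i := by rw [hsumT]; exact hk
    have hk1 : (1:ℝ) ≤ (k:ℝ) := by
      have hkpos : (0:ℤ) < k := by
        by_contra hneg
        push_neg at hneg
        have hkr : (k:ℝ) ≤ 0 := by exact_mod_cast hneg
        have hTr : (1:ℝ) ≤ (T.card:ℝ) := by exact_mod_cast hTm1
        nlinarith
      exact_mod_cast hkpos
    have hkm : (k:ℝ) ≤ (n:ℝ) - 1 := by
      have hklt : (k:ℝ) < (T.card:ℝ) := by nlinarith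
      have hklt' : k < (T.card:ℤ) := by exact_mod_cast hklt
      have h2 : k ≤ (T.card:ℤ) - 1 := by omega
      have h3 : (k:ℝ) ≤ (T.card:ℝ) - 1 := by exact_mod_cast h2
      have h4 : (T.card:ℝ) ≤ (n:ℝ) := by exact_mod_cast hTmn
      linarith
    have hTr : (T.card:ℝ) ≥ (k:ℝ) + 1 := by
      have hklt : (k:ℝ) < (T.card:ℝ) := by nlinarith
      have hklt' : k < (T.card:ℤ) := by exact_mod_cast hklt
      have h2 : k + 1 ≤ (T.card:ℤ) := by omega
      exact_mod_cast h2
    rw [div_le_iff₀ (by linarith : (0:ℝ) < (n:ℝ)-1)]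
    nlinarith [hkp, hge, hk1, hkm, hTr, hp0]

lemma frac_mem (hn : 2 ≤ n) :
    ∃ x : Finset (ZMod n) → ℝ, (∀ A, 0 ≤ x A) ∧
      (∀ A : Finset (ZMod n), x A ≠ 0 → AcyclicOn (dirCycle n) ↑A) ∧
      (∀ v : ZMod n, 1 ≤ ∑ A ∈ Finset.univ.filter (fun A : Finset (ZMod n) => v ∈ A), x A) ∧
      (n : ℝ)/((n:ℝ)-1) = ∑ A : Finset (ZMod n), x A := by
  have h1 := nreal hn
  have hne : (n:ℝ) - 1 ≠ 0 := by linarith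
  set x : Finset (ZMod n) → ℝ := fun A =>
    ((Finset.univ.filter (fun i : ZMod n => A = Finset.univ.erase i)).card : ℝ) / ((n:ℝ)-1)
    with hxdef
  have hswap : ∀ F : Finset (Finset (ZMod n)),
      ∑ A ∈ F, ((Finset.univ.filter (fun i : ZMod n => A = Finset.univ.erase i)).card : ℝ)
      = ((Finset.univ.filter (fun i : ZMod n => Finset.univ.erase i ∈ F)).card : ℝ) := by
    intro F
    have hA : ∀ A : Finset (ZMod n),
        ((Finset.univ.filter (fun i : ZMod n => A = Finset.univ.erase i)).card : ℝ)
        = ∑ i : ZMod n, if A = Finset.univ.erase i then (1:ℝ) else 0 := by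
      intro A
      rw [Finset.card_filter]
      push_cast
      exact Finset.sum_congr rfl (fun i _ => by split <;> norm_num)
    rw [Finset.sum_congr rfl (fun A _ => hA A), Finset.sum_comm]
    rw [Finset.sum_congr rfl
      (fun i _ => Finset.sum_ite_eq' F (Finset.univ.erase i) (fun _ => (1:ℝ)))]
    rw [Finset.card_filter]
    push_cast
    exact Finset.sum_congr rfl (fun i _ => by split <;> norm_num)
  refine ⟨x, ?_, ?_, ?_, ?_⟩
  · intro A
    rw [hxdef]
    positivity
  · intro A hxA
    rw [acyclic_iff]
    intro hall
    rw [hxdef] at hxA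
    have hcard : (Finset.univ.filter (fun i : ZMod n => A = Finset.univ.erase i)).card ≠ 0 := by
      intro h
      apply hxA
      simp [h]
    obtain ⟨i, hi⟩ := Finset.card_ne_zero.mp hcard
    have hAi : A = Finset.univ.erase i := (Finset.mem_filter.mp hi).2
    have := hall i
    rw [Finset.mem_coe, hAi] at this
    exact Finset.notMem_erase i _ this
  · intro v
    have hsum : ∑ A ∈ Finset.univ.filter (fun A : Finset (ZMod n) => v ∈ A), x A
        = ((Finset.univ.filter (fun i : ZMod n =>
            Finset.univ.erase i ∈ Finset.univ.filter (fun A : Finset (ZMod n) => v ∈ A))).card : ℝ)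
          / ((n:ℝ)-1) := by
      rw [hxdef, ← Finset.sum_div, hswap]
    rw [hsum]
    have hfil : Finset.univ.filter (fun i : ZMod n =>
        Finset.univ.erase i ∈ Finset.univ.filter (fun A : Finset (ZMod n) => v ∈ A))
        = Finset.univ.erase v := by
      ext i
      simp only [Finset.mem_filter, Finset.mem_erase, Finset.mem_univ, true_and, and_true]
      exact ne_comm
    rw [hfil, Finset.card_erase_of_mem (Finset.mem_univ v), Finset.card_univ, ZMod.card]
    have hc : ((n-1:ℕ):ℝ) = (n:ℝ)-1 := by
      have h2 : 1 ≤ n := by omega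
      push_cast [h2]
      ring
    rw [hc, div_self hne]
  · have hsum : ∑ A : Finset (ZMod n), x A
        = ((Finset.univ.filter (fun i : ZMod n =>
            Finset.univ.erase i ∈ (Finset.univ : Finset (Finset (ZMod n))))).card : ℝ)
          / ((n:ℝ)-1) := by
      rw [hxdef, ← Finset.sum_div, hswap]
    rw [hsum]
    have : Finset.univ.filter (fun i : ZMod n =>
        Finset.univ.erase i ∈ (Finset.univ : Finset (Finset (ZMod n)))) = Finset.univ := by
      simp
    rw [this, Finset.card_univ, ZMod.card]

lemma frac_lb (hn : 2 ≤ n) (x : Finset (ZMod n) → ℝ) (hpos : ∀ A, 0 ≤ x A)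
    (hsupp : ∀ A : Finset (ZMod n), x A ≠ 0 → AcyclicOn (dirCycle n) ↑A)
    (hcov : ∀ v : ZMod n, 1 ≤ ∑ A ∈ Finset.univ.filter (fun A : Finset (ZMod n) => v ∈ A), x A) :
    (n : ℝ)/((n:ℝ)-1) ≤ ∑ A : Finset (ZMod n), x A := by
  have h1 := nreal hn
  have hswap2 : ∑ v : ZMod n, ∑ A ∈ Finset.univ.filter (fun A : Finset (ZMod n) => v ∈ A), x A
      = ∑ A : Finset (ZMod n), (A.card : ℝ) * x A := by
    have hv : ∀ v : ZMod n, ∑ A ∈ Finset.univ.filter (fun A : Finset (ZMod n) => v ∈ A), x A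
        = ∑ A : Finset (ZMod n), if v ∈ A then x A else 0 :=
      fun v => Finset.sum_filter _ _
    rw [Finset.sum_congr rfl (fun v _ => hv v), Finset.sum_comm]
    refine Finset.sum_congr rfl (fun A _ => ?_)
    rw [Finset.sum_ite, Finset.sum_const, Finset.sum_const_zero, add_zero]
    have : Finset.univ.filter (fun v : ZMod n => v ∈ A) = A := by
      ext v; simp
    rw [this, nsmul_eq_mul]
  have hcardle : ∀ A : Finset (ZMod n), (A.card:ℝ) * x A ≤ ((n:ℝ)-1) * x A := by
    intro A
    by_cases hA : x A = 0
    · rw [hA]; simp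
    · have hacy := hsupp A hA
      rw [acyclic_iff] at hacy
      obtain ⟨z, hz⟩ := not_forall.mp hacy
      have hzA : z ∉ A := fun h => hz (Finset.mem_coe.mpr h)
      have hsub : A ⊆ Finset.univ.erase z :=
        fun a ha => Finset.mem_erase.mpr ⟨fun h => hzA (h ▸ ha), Finset.mem_univ a⟩
      have hcard : A.card ≤ n - 1 := by
        have := Finset.card_le_card hsub
        rwa [Finset.card_erase_of_mem (Finset.mem_univ z), Finset.card_univ, ZMod.card] at this
      have hcR : (A.card:ℝ) ≤ (n:ℝ) - 1 := by
        have hc : ((n-1:ℕ):ℝ) = (n:ℝ)-1 := by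
          have h2 : 1 ≤ n := by omega
          push_cast [h2]
          ring
        rw [← hc]
        exact_mod_cast hcard
      exact mul_le_mul_of_nonneg_right hcR (hpos A)
  have e1 : (n:ℝ) = ∑ _v : ZMod n, (1:ℝ) := by
    rw [Finset.sum_const, Finset.card_univ, ZMod.card, nsmul_eq_mul, mul_one]
  have e2 : ∑ _v : ZMod n, (1:ℝ)
      ≤ ∑ v : ZMod n, ∑ A ∈ Finset.univ.filter (fun A : Finset (ZMod n) => v ∈ A), x A :=
    Finset.sum_le_sum (fun v _ => hcov v)
  have e3 : ∑ A : Finset (ZMod n), (A.card:ℝ)*x A ≤ ∑ A : Finset (ZMod n), ((n:ℝ)-1)*x A :=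
    Finset.sum_le_sum (fun A _ => hcardle A)
  rw [← Finset.mul_sum] at e3
  rw [div_le_iff₀ (by linarith : (0:ℝ) < (n:ℝ)-1)]
  nlinarith [hswap2, e1, e2, e3]

end Stmt11aux

/-- for the directed cycle `C⃗_n`, `n ≥ 2`,
`χ⃗_f = χ⃗* = χ⃗_c = n/(n-1)`. -/
theorem stmt11 (n : ℕ) [NeZero n] (hn : 2 ≤ n) :
    fracDichromatic (dirCycle n) = (n : ℝ) / ((n : ℝ) - 1) ∧
    starDichromatic (dirCycle n) = (n : ℝ) / ((n : ℝ) - 1) ∧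
    circularDichromatic (dirCycle n) = (n : ℝ) / ((n : ℝ) - 1) := by
  have hq1 : (1:ℝ) ≤ (n:ℝ)/((n:ℝ)-1) := le_of_lt (Stmt11aux.qgt hn)
  refine ⟨?_, ?_, ?_⟩
  · -- fractional
    have hmem : (n:ℝ)/((n:ℝ)-1) ∈ {r : ℝ | ∃ x : Finset (ZMod n) → ℝ, (∀ A, 0 ≤ x A) ∧
        (∀ A : Finset (ZMod n), x A ≠ 0 → AcyclicOn (dirCycle n) ↑A) ∧
        (∀ v : ZMod n, 1 ≤ ∑ A ∈ Finset.univ.filter (fun A : Finset (ZMod n) => v ∈ A), x A) ∧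
        (n:ℝ)/((n:ℝ)-1) = ∑ A : Finset (ZMod n), x A} := by
      obtain ⟨x, h1, h2, h3, h4⟩ := Stmt11aux.frac_mem hn
      exact ⟨x, h1, h2, h3, h4⟩
    have hlb : ∀ r ∈ {r : ℝ | ∃ x : Finset (ZMod n) → ℝ, (∀ A, 0 ≤ x A) ∧
        (∀ A : Finset (ZMod n), x A ≠ 0 → AcyclicOn (dirCycle n) ↑A) ∧
        (∀ v : ZMod n, 1 ≤ ∑ A ∈ Finset.univ.filter (fun A : Finset (ZMod n) => v ∈ A), x A) ∧
        r = ∑ A : Finset (ZMod n), x A}, (n:ℝ)/((n:ℝ)-1) ≤ r := by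
      rintro r ⟨x, h1, h2, h3, rfl⟩
      exact Stmt11aux.frac_lb hn x h1 h2 h3
    exact le_antisymm (csInf_le ⟨_, hlb⟩ hmem) (le_csInf ⟨_, hmem⟩ hlb)
  · -- star
    have hmem : (n:ℝ)/((n:ℝ)-1) ∈ {p : ℝ | 1 ≤ p ∧
        ∃ c : ZMod n → AddCircle p, IsAcyclicColouring (dirCycle n) p c} := by
      obtain ⟨c, hc⟩ := Stmt11aux.star_mem hn
      exact ⟨hq1, c, hc⟩
    have hlb : ∀ p ∈ {p : ℝ | 1 ≤ p ∧
        ∃ c : ZMod n → AddCircle p, IsAcyclicColouring (dirCycle n) p c},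
        (n:ℝ)/((n:ℝ)-1) ≤ p := by
      rintro p ⟨hp1, c, hc⟩
      exact Stmt11aux.star_lb hn hp1 c hc
    exact le_antisymm (csInf_le ⟨_, hlb⟩ hmem) (le_csInf ⟨_, hmem⟩ hlb)
  · -- circular
    have hmem : (n:ℝ)/((n:ℝ)-1) ∈ {p : ℝ | 1 ≤ p ∧
        ∃ c : ZMod n → AddCircle p, IsWeakCircularColouring (dirCycle n) p c} := by
      obtain ⟨c, hc1, hc2⟩ := Stmt11aux.circ_mem hn
      exact ⟨hq1, c, hc1, hc2⟩
    have hlb : ∀ p ∈ {p : ℝ | 1 ≤ p ∧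
        ∃ c : ZMod n → AddCircle p, IsWeakCircularColouring (dirCycle n) p c},
        (n:ℝ)/((n:ℝ)-1) ≤ p := by
      rintro p ⟨hp1, c, hc⟩
      exact Stmt11aux.circ_lb hn hp1 c hc.1 hc.2
    exact le_antisymm (csInf_le ⟨_, hlb⟩ hmem) (le_csInf ⟨_, hmem⟩ hlb)
end

section
/- For every real number C > 0 there exists a loopless digraph D with χ⃗*(D) − χ⃗_f(D) = χ⃗_c(D) − χ⃗_f(D) ≥ C; in particular, the star and circular dichromatic numbers can exceed the fractional dichromatic number by an arbitrarily large amount. -/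
open Finset

variable {V : Type*}

/-! ### Auxiliary material for stmt12 -/

section Aux

lemma acyclicOn_of_indep {E : V → V → Prop} {A : Set V}
    (h : ∀ u ∈ A, ∀ w ∈ A, ¬ E u w) : AcyclicOn E A := by
  rintro v l ⟨hnd, hch⟩ hall
  cases l with
  | nil =>
    have : E v v := by simpa [List.Chain] using hch
    exact h v (hall v (by simp)) v (hall v (by simp)) this
  | cons x l' =>
    have : E v x := (List.isChain_cons_cons.mp hch).1
    exact h v (hall v (by simp)) x (hall x (by simp)) this

lemma twoDicycle {E : V → V → Prop} {u w : V} (h1 : E u w) (h2 : E w u)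
    (hne : u ≠ w) : IsDicycle E u [w] := by
  refine ⟨by simp [hne], ?_⟩
  simp [List.Chain, h1, h2]

lemma acyclicOn_mono {E : V → V → Prop} {A B : Set V} (hAB : A ⊆ B)
    (h : AcyclicOn E B) : AcyclicOn E A :=
  fun v l hd hall => h v l hd (fun x hx => hAB (hall x hx))

lemma coe_equivIco_symm (p : ℝ) [Fact (0 < p)] (x : AddCircle p) :
    (((AddCircle.equivIco p 0 x : ℝ)) : AddCircle p) = x :=
  (AddCircle.equivIco p 0).symm_apply_apply x

/-- For symmetric loopless digraphs, acyclic colourings and weak circular colourings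
exist for the same periods `p`. -/
lemma starSet_eq_circSet (E : V → V → Prop) (hs : ∀ u w, E u w → E w u)
    (hi : ∀ v, ¬ E v v) :
    {p : ℝ | 1 ≤ p ∧ ∃ c : V → AddCircle p, IsAcyclicColouring E p c}
      = {p : ℝ | 1 ≤ p ∧ ∃ c : V → AddCircle p, IsWeakCircularColouring E p c} := by
  ext p
  simp only [Set.mem_setOf_eq]
  constructor
  · rintro ⟨hp, c, hc⟩
    haveI : Fact (0 < p) := ⟨by linarith⟩
    refine ⟨hp, c, ?_, ?_⟩
    · intro u w huw
      set s : ℝ := (AddCircle.equivIco p 0 (c w - c u) : ℝ) with hs_def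
      have hmem : s ∈ Set.Ico (0:ℝ) (0 + p) := (AddCircle.equivIco p 0 (c w - c u)).2
      have hcoe : (s : AddCircle p) = c w - c u := coe_equivIco_symm p _
      rcases eq_or_lt_of_le hmem.1 with h0 | h0
      · left
        have : ((0:ℝ) : AddCircle p) = c w - c u := by rw [h0]; exact hcoe
        have : c w - c u = 0 := by rw [← this]; norm_num
        have := sub_eq_zero.mp this
        exact this.symm
      · by_cases h1 : 1 ≤ s
        · exact Or.inr ⟨s, ⟨hmem.1, by simpa using hmem.2⟩, hcoe, h1⟩
        · exfalso
          push_neg at h1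
          set a : ℝ := (AddCircle.equivIco p 0 (c u) : ℝ) with ha_def
          have hca : ((a:ℝ) : AddCircle p) = c u := coe_equivIco_symm p _
          have hne : u ≠ w := by
            intro h
            apply absurd hcoe
            rw [h, sub_self]
            intro hh
            have h00 : (0:ℝ) ∈ Set.Ico (0:ℝ) (0+p) := by
              constructor <;> simp [Fact.out (p := 0 < p)]
            have := (AddCircle.coe_eq_coe_iff_of_mem_Ico hmem h00).mp (by simpa using hh)
            linarith
          refine hc (a - (1 - s)/2) u [w] (twoDicycle huw (hs u w huw) hne) ?_
          intro y hy
          simp only [List.mem_cons, List.not_mem_nil, or_false] at hy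
          rcases hy with h | h
          · refine ⟨a, ⟨by linarith, by linarith⟩, ?_⟩
            show ((a : ℝ) : AddCircle p) = c y
            rw [hca, h]
          · refine ⟨a + s, ⟨by linarith, by linarith⟩, ?_⟩
            show ((a + s : ℝ) : AddCircle p) = c y
            rw [AddCircle.coe_add, hca, hcoe, h]
            abel
    · intro t
      set ℓ : ℝ := (AddCircle.equivIco p 0 t : ℝ) with hl_def
      refine acyclicOn_mono ?_ (hc (ℓ - 1/2))
      intro x hx
      have hxt : c x = t := hx
      refine ⟨ℓ, ⟨by linarith, by linarith⟩, ?_⟩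
      show ((ℓ : ℝ) : AddCircle p) = c x
      rw [hl_def, coe_equivIco_symm p t, hxt]
  · rintro ⟨hp, c, harc, hfib⟩
    haveI : Fact (0 < p) := ⟨by linarith⟩
    refine ⟨hp, c, ?_⟩
    intro a
    apply acyclicOn_of_indep
    intro u hu w hw huw
    obtain ⟨x₁, hx₁, hcx₁'⟩ := hu
    obtain ⟨x₂, hx₂, hcx₂'⟩ := hw
    have hcx₁ : ((x₁ : ℝ) : AddCircle p) = c u := hcx₁'
    have hcx₂ : ((x₂ : ℝ) : AddCircle p) = c w := hcx₂'
    have hneq : u ≠ w := fun h => hi u (h ▸ huw)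
    have hcune : c u ≠ c w := by
      intro hEq
      refine hfib (c u) u [w] (twoDicycle huw (hs u w huw) hneq) ?_
      intro y hy
      simp only [List.mem_cons, List.not_mem_nil, or_false] at hy
      rcases hy with h | h
      · simp [h]
      · simp [h, hEq]
    rcases harc u w huw with h | ⟨r, hrIco, hrcoe, hr1⟩
    · exact hcune h
    rcases harc w u (hs u w huw) with h | ⟨r', hrIco', hrcoe', hr1'⟩
    · exact hcune h.symm
    rcases le_total x₁ x₂ with hle | hle
    · have hco : ((x₂ - x₁ : ℝ) : AddCircle p) = c w - c u := by
        rw [AddCircle.coe_sub, hcx₁, hcx₂]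
      have hIc : x₂ - x₁ ∈ Set.Ico (0:ℝ) (0 + p) := by
        constructor
        · linarith
        · have : x₂ - x₁ < 1 := by
            rcases hx₁ with ⟨h1, h2⟩; rcases hx₂ with ⟨h3, h4⟩; linarith
          linarith
      have hIc' : r ∈ Set.Ico (0:ℝ) (0 + p) := by simpa using hrIco
      have heq : x₂ - x₁ = r :=
        (AddCircle.coe_eq_coe_iff_of_mem_Ico hIc hIc').mp (hco.trans hrcoe.symm)
      rcases hx₁ with ⟨h1, h2⟩; rcases hx₂ with ⟨h3, h4⟩
      linarith
    · have hco : ((x₁ - x₂ : ℝ) : AddCircle p) = c u - c w := by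
        rw [AddCircle.coe_sub, hcx₁, hcx₂]
      have hIc : x₁ - x₂ ∈ Set.Ico (0:ℝ) (0 + p) := by
        constructor
        · linarith
        · have : x₁ - x₂ < 1 := by
            rcases hx₁ with ⟨h1, h2⟩; rcases hx₂ with ⟨h3, h4⟩; linarith
          linarith
      have hIc' : r' ∈ Set.Ico (0:ℝ) (0 + p) := by simpa using hrIco'
      have heq : x₁ - x₂ = r' :=
        (AddCircle.coe_eq_coe_iff_of_mem_Ico hIc hIc').mp (hco.trans hrcoe'.symm)
      rcases hx₁ with ⟨h1, h2⟩; rcases hx₂ with ⟨h3, h4⟩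
      linarith

end Aux

/-- The bidirected shift graph, as a digraph on `Fin (N * N)`: the vertex `v` encodes the
pair `(v / N, v % N)`; pairs `(a, b)` with `a < b` form the vertices of the shift graph,
with `(a, b)` adjacent to `(b, c)`, and all arcs present in both directions. -/
def shiftE (N : ℕ) : Fin (N * N) → Fin (N * N) → Prop := fun u w =>
  (u : ℕ) / N < (u : ℕ) % N ∧ (w : ℕ) / N < (w : ℕ) % N ∧
    ((u : ℕ) % N = (w : ℕ) / N ∨ (w : ℕ) % N = (u : ℕ) / N)

lemma shiftE_irrefl (N : ℕ) (v : Fin (N * N)) : ¬ shiftE N v v := by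
  rintro ⟨h1, h2, h3 | h3⟩ <;> omega

lemma shiftE_symm (N : ℕ) (u w : Fin (N * N)) (h : shiftE N u w) : shiftE N w u := by
  obtain ⟨h1, h2, h3⟩ := h
  exact ⟨h2, h1, h3.symm⟩

section Shift

/-- Membership of `n` in the circular set: the injective, well-spread colouring. -/
lemma circSet_mem (n : ℕ) (hn : 0 < n) (E : Fin n → Fin n → Prop) (hi : ∀ v, ¬ E v v) :
    ((n : ℝ)) ∈ {p : ℝ | 1 ≤ p ∧ ∃ c : Fin n → AddCircle p, IsWeakCircularColouring E p c} := by
  have hn1 : (1:ℝ) ≤ (n:ℝ) := by exact_mod_cast hn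
  haveI : Fact ((0:ℝ) < (n:ℝ)) := ⟨by linarith⟩
  refine ⟨hn1, fun v => (((v : ℕ) : ℝ) : AddCircle (n:ℝ)), ?_, ?_⟩
  · intro u w huw
    have hne : u ≠ w := fun h => hi u (h ▸ huw)
    have hvne : (u : ℕ) ≠ (w : ℕ) := fun h => hne (Fin.ext h)
    right
    rcases lt_or_gt_of_ne hvne with hlt | hlt
    · refine ⟨((w : ℕ) : ℝ) - ((u : ℕ) : ℝ), ⟨by
        have : ((u:ℕ):ℝ) ≤ ((w:ℕ):ℝ) := by exact_mod_cast hlt.le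
        linarith, ?_⟩, by rw [AddCircle.coe_sub], ?_⟩
      · have hw : (w : ℕ) < n := w.isLt
        have hu : (0:ℝ) ≤ ((u:ℕ):ℝ) := by positivity
        have : ((w:ℕ):ℝ) < (n:ℝ) := by exact_mod_cast hw
        linarith
      · have : (u:ℕ) + 1 ≤ (w:ℕ) := hlt
        have : ((u:ℕ):ℝ) + 1 ≤ ((w:ℕ):ℝ) := by exact_mod_cast this
        linarith
    · refine ⟨(n:ℝ) - (((u : ℕ) : ℝ) - ((w : ℕ) : ℝ)), ⟨?_, ?_⟩, ?_, ?_⟩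
      · have hu : (u : ℕ) < n := u.isLt
        have : ((u:ℕ):ℝ) < (n:ℝ) := by exact_mod_cast hu
        have hw : (0:ℝ) ≤ ((w:ℕ):ℝ) := by positivity
        linarith
      · have : (w:ℕ) + 1 ≤ (u:ℕ) := hlt
        have : ((w:ℕ):ℝ) + 1 ≤ ((u:ℕ):ℝ) := by exact_mod_cast this
        linarith
      · rw [AddCircle.coe_sub, AddCircle.coe_sub, AddCircle.coe_period]
        abel
      · have : (w:ℕ) + 1 ≤ (u:ℕ) := hlt
        have h1 : ((w:ℕ):ℝ) + 1 ≤ ((u:ℕ):ℝ) := by exact_mod_cast this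
        have hu : (u : ℕ) < n := u.isLt
        have h2 : ((u:ℕ):ℝ) + 1 ≤ (n:ℝ) := by exact_mod_cast hu
        linarith
  · intro t
    apply acyclicOn_of_indep
    intro u hu w hw
    have hut : (((u : ℕ) : ℝ) : AddCircle (n:ℝ)) = t := hu
    have hwt : (((w : ℕ) : ℝ) : AddCircle (n:ℝ)) = t := hw
    have hmu : ((u:ℕ):ℝ) ∈ Set.Ico (0:ℝ) (0 + (n:ℝ)) := by
      constructor
      · positivity
      · have := u.isLt
        have : ((u:ℕ):ℝ) < (n:ℝ) := by exact_mod_cast this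
        linarith
    have hmw : ((w:ℕ):ℝ) ∈ Set.Ico (0:ℝ) (0 + (n:ℝ)) := by
      constructor
      · positivity
      · have := w.isLt
        have : ((w:ℕ):ℝ) < (n:ℝ) := by exact_mod_cast this
        linarith
    have : ((u:ℕ):ℝ) = ((w:ℕ):ℝ) :=
      (AddCircle.coe_eq_coe_iff_of_mem_Ico hmu hmw).mp (hut.trans hwt.symm)
    have : u = w := Fin.ext (by exact_mod_cast this)
    subst this
    exact hi u

/-- encoding of a pair into `Fin (N * N)` -/
def encP (N : ℕ) (i j : Fin N) : Fin (N * N) :=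
  ⟨(i : ℕ) * N + (j : ℕ), by
    have hi := i.isLt
    have hj := j.isLt
    calc (i : ℕ) * N + (j : ℕ) < (i : ℕ) * N + N := by omega
    _ = ((i : ℕ) + 1) * N := by ring
    _ ≤ N * N := Nat.mul_le_mul_right N hi⟩

lemma encP_div (N : ℕ) (hN : 0 < N) (i j : Fin N) : ((encP N i j : ℕ)) / N = (i : ℕ) := by
  show ((i : ℕ) * N + (j : ℕ)) / N = (i : ℕ)
  rw [add_comm, Nat.add_mul_div_right _ _ hN, Nat.div_eq_of_lt j.isLt, zero_add]

lemma encP_mod (N : ℕ) (i j : Fin N) : ((encP N i j : ℕ)) % N = (j : ℕ) := by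
  show ((i : ℕ) * N + (j : ℕ)) % N = (j : ℕ)
  rw [add_comm, Nat.add_mul_mod_self_right, Nat.mod_eq_of_lt j.isLt]

/-- Lower bound on any weak circular colouring period of the bidirected shift graph. -/
lemma circ_lower (m N : ℕ) (hN : 0 < N) (hNm : 2^m ≤ N) (p : ℝ) (hp : 1 ≤ p)
    (c : Fin (N * N) → AddCircle p)
    (h : IsWeakCircularColouring (shiftE N) p c) : (m : ℝ) - 1 ≤ p := by
  haveI : Fact (0 < p) := ⟨by linarith⟩
  set r : Fin (N * N) → ℝ := fun v => (AddCircle.equivIco p 0 (c v) : ℝ) with hr_def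
  have hrmem : ∀ v, r v ∈ Set.Ico (0:ℝ) (0 + p) := fun v => (AddCircle.equivIco p 0 (c v)).2
  have hrcoe : ∀ v, ((r v : ℝ) : AddCircle p) = c v := fun v => coe_equivIco_symm p (c v)
  set k : ℕ := ⌈p⌉₊ with hk_def
  set φ : Fin (N * N) → ℕ := fun v => ⌊r v⌋₊ with hφ_def
  have hφlt : ∀ v, φ v < k := by
    intro v
    have h1 : r v < p := by have := (hrmem v).2; linarith
    have h2 : p ≤ (k : ℝ) := Nat.le_ceil p
    exact Nat.floor_lt (hrmem v).1 |>.mpr (by linarith)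
  have haux : ∀ u w, shiftE N u w → r u ≤ r w → φ u = φ w → False := by
    intro u w huw hle heq
    have hne : u ≠ w := fun e => shiftE_irrefl N u (e ▸ huw)
    rcases h.1 u w huw with hcc | ⟨r', hIco, hcoe, h1⟩
    · refine h.2 (c u) u [w] (twoDicycle huw (shiftE_symm N u w huw) hne) ?_
      intro y hy
      simp only [List.mem_cons, List.not_mem_nil, or_false] at hy
      rcases hy with hh | hh
      · simp [hh]
      · simp [hh, hcc]
    · have hlt1 : r w - r u < 1 := by
        have h1' : r w < (φ w : ℕ) + 1 := Nat.lt_floor_add_one (r w)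
        have h2' : ((φ u : ℕ) : ℝ) ≤ r u := Nat.floor_le (hrmem u).1
        rw [heq] at h2'
        push_cast at h1'
        linarith
      have hdiff : r w - r u ∈ Set.Ico (0:ℝ) (0 + p) := ⟨by linarith, by linarith⟩
      have hIco' : r' ∈ Set.Ico (0:ℝ) (0 + p) := by simpa using hIco
      have hco : ((r w - r u : ℝ) : AddCircle p) = c w - c u := by
        rw [AddCircle.coe_sub, hrcoe, hrcoe]
      have : r w - r u = r' :=
        (AddCircle.coe_eq_coe_iff_of_mem_Ico hdiff hIco').mp (hco.trans hcoe.symm)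
      linarith
  have hproper : ∀ u w, shiftE N u w → φ u ≠ φ w := by
    intro u w huw heq
    rcases le_total (r u) (r w) with hle | hle
    · exact haux u w huw hle heq
    · exact haux w u (shiftE_symm N u w huw) hle heq.symm
  -- the shift-graph colour-sets argument
  set A : Fin N → Finset (Fin k) := fun i =>
    (univ.filter fun j : Fin N => (i : ℕ) < (j : ℕ)).image
      (fun j => (⟨φ (encP N i j), hφlt _⟩ : Fin k)) with hA_def
  have hAne : ∀ i j : Fin N, (i : ℕ) < (j : ℕ) → A i ≠ A j := by
    intro i j hij hAeq
    have h1 : (⟨φ (encP N i j), hφlt _⟩ : Fin k) ∈ A i := by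
      rw [hA_def]
      exact mem_image.mpr ⟨j, mem_filter.mpr ⟨mem_univ _, hij⟩, rfl⟩
    rw [hAeq] at h1
    rw [hA_def] at h1
    obtain ⟨l, hl, hval⟩ := mem_image.mp h1
    have hjl : (j : ℕ) < (l : ℕ) := (mem_filter.mp hl).2
    have hadj : shiftE N (encP N i j) (encP N j l) := by
      refine ⟨?_, ?_, Or.inl ?_⟩
      · rw [encP_div N hN, encP_mod N]; exact hij
      · rw [encP_div N hN, encP_mod N]; exact hjl
      · rw [encP_mod N, encP_div N hN]
    have hvv : φ (encP N j l) = φ (encP N i j) := by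
      have := congrArg Fin.val hval
      simpa using this
    exact hproper _ _ hadj hvv.symm
  have hAinj : Function.Injective A := by
    intro i j hij
    by_contra hne
    have hvne : (i : ℕ) ≠ (j : ℕ) := fun e => hne (Fin.ext e)
    rcases lt_or_gt_of_ne hvne with hlt | hlt
    · exact hAne i j hlt hij
    · exact hAne j i hlt hij.symm
  have hcard : N ≤ 2 ^ k := by
    have := Fintype.card_le_of_injective A hAinj
    rwa [Fintype.card_fin, Fintype.card_finset, Fintype.card_fin] at this
  have hmk : m ≤ k := (Nat.pow_le_pow_iff_right (by norm_num)).mp (le_trans hNm hcard)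
  have h1 : ((k : ℕ) : ℝ) < p + 1 := Nat.ceil_lt_add_one (by linarith)
  have h2 : ((m : ℕ) : ℝ) ≤ ((k : ℕ) : ℝ) := by exact_mod_cast hmk
  linarith

/-- The acyclic (independent) sets used in the fractional colouring. -/
def shiftInd (N : ℕ) (A : Finset ℕ) : Finset (Fin (N * N)) :=
  univ.filter (fun v : Fin (N * N) =>
    ¬((v : ℕ) / N < (v : ℕ) % N) ∨ ((v : ℕ) / N ∈ A ∧ (v : ℕ) % N ∉ A))

/-- The fractional weight function. -/
noncomputable def shiftX (N : ℕ) (B : Finset (Fin (N * N))) : ℝ :=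
  (4 / 2 ^ N) *
    ((((Finset.range N).powerset).filter (fun A => shiftInd N A = B)).card : ℝ)

lemma shiftX_nonneg (N : ℕ) (B : Finset (Fin (N * N))) : 0 ≤ shiftX N B := by
  unfold shiftX
  positivity

lemma shiftInd_indep (N : ℕ) (A : Finset ℕ) :
    AcyclicOn (shiftE N) ↑(shiftInd N A) := by
  apply acyclicOn_of_indep
  intro u hu w hw huw
  obtain ⟨h1u, h2u, h3⟩ := huw
  have hu' := (mem_filter.mp hu).2
  have hw' := (mem_filter.mp hw).2
  rcases hu' with hu' | hu'
  · exact hu' h1u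
  rcases hw' with hw' | hw'
  · exact hw' h2u
  rcases h3 with h3 | h3
  · exact hu'.2 (by rw [h3]; exact hw'.1)
  · exact hw'.2 (by rw [h3]; exact hu'.1)

lemma shiftX_sum_filter (N : ℕ) (P : Finset (Fin (N * N)) → Prop) [DecidablePred P] :
    ∑ B ∈ univ.filter P, shiftX N B
      = (4 / 2 ^ N) *
        (((((Finset.range N).powerset).filter (fun A => P (shiftInd N A)))).card : ℝ) := by
  unfold shiftX
  rw [← Finset.mul_sum]
  congr 1
  rw [← Nat.cast_sum]
  congr 1
  have hfib := Finset.card_eq_sum_card_fiberwise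
    (f := shiftInd N) (s := ((Finset.range N).powerset).filter (fun A => P (shiftInd N A)))
    (t := univ.filter P)
    (fun A hA => mem_filter.mpr ⟨mem_univ _, (mem_filter.mp hA).2⟩)
  rw [hfib]
  apply Finset.sum_congr rfl
  intro B hB
  have hPB : P B := (mem_filter.mp hB).2
  rw [Finset.filter_filter]
  refine congrArg Finset.card (Finset.filter_congr ?_)
  intro A _
  constructor
  · intro hh
    exact ⟨by rw [hh]; exact hPB, hh⟩
  · exact fun hh => hh.2

/-- Fractional dichromatic number of the bidirected shift graph is at most 4. -/
lemma frac_upper (N : ℕ) (hN : 2 ≤ N) : fracDichromatic (shiftE N) ≤ 4 := by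
  classical
  have hN0 : 0 < N := by omega
  apply csInf_le
  · refine ⟨0, ?_⟩
    rintro rr ⟨y, hy0, _, _, rfl⟩
    exact Finset.sum_nonneg (fun A _ => hy0 A)
  · refine ⟨shiftX N, shiftX_nonneg N, ?_, ?_, ?_⟩
    · intro B hB
      have hex : ∃ A ∈ (Finset.range N).powerset, shiftInd N A = B := by
        by_contra hcon
        push_neg at hcon
        apply hB
        unfold shiftX
        have : ((Finset.range N).powerset.filter (fun A => shiftInd N A = B)) = ∅ := by
          apply Finset.filter_eq_empty_iff.mpr
          intro A hA
          exact hcon A hA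
        rw [this]
        simp
      obtain ⟨A, _, rfl⟩ := hex
      exact shiftInd_indep N A
    · intro v
      rw [shiftX_sum_filter N (fun B => v ∈ B)]
      have hbound : 2 ^ (N - 2)
          ≤ (((Finset.range N).powerset).filter (fun A => v ∈ shiftInd N A)).card := by
        by_cases hv : (v : ℕ) / N < (v : ℕ) % N
        · set a : ℕ := (v : ℕ) / N with ha_def
          set b : ℕ := (v : ℕ) % N with hb_def
          have hbN : b < N := Nat.mod_lt _ hN0
          have haN : a < N := by
            have : (v : ℕ) < N * N := v.isLt
            exact Nat.div_lt_iff_lt_mul hN0 |>.mpr this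
          have hab : a ≠ b := Nat.ne_of_lt hv
          have hsub : 2 ^ (N - 2)
              = ((((Finset.range N).erase a).erase b).powerset).card := by
            rw [Finset.card_powerset]
            congr 1
            rw [Finset.card_erase_of_mem
                (Finset.mem_erase.mpr ⟨Ne.symm hab, Finset.mem_range.mpr hbN⟩),
              Finset.card_erase_of_mem (Finset.mem_range.mpr haN), Finset.card_range]
            omega
          rw [hsub]
          apply Finset.card_le_card_of_injOn (fun S => insert a S)
          · intro S hS
            have hS' : S ⊆ ((Finset.range N).erase a).erase b := Finset.mem_powerset.mp hS
            have hbS : b ∉ S := by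
              intro hc
              exact (Finset.mem_erase.mp (hS' hc)).1 rfl
            refine mem_filter.mpr ⟨?_, ?_⟩
            · apply Finset.mem_powerset.mpr
              intro y hy
              rcases Finset.mem_insert.mp hy with rfl | hy'
              · exact Finset.mem_range.mpr haN
              · exact Finset.mem_of_mem_erase (Finset.mem_of_mem_erase (hS' hy'))
            · refine mem_filter.mpr ⟨mem_univ _, Or.inr ⟨?_, ?_⟩⟩
              · rw [← ha_def]
                exact Finset.mem_insert_self _ _
              · rw [← hb_def]
                intro hc
                rcases Finset.mem_insert.mp hc with h' | h'
                · exact hab h'.symm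
                · exact hbS h'
          · intro S hS S' hS' hins
            have hS2 : S ⊆ ((Finset.range N).erase a).erase b :=
              Finset.mem_powerset.mp (Finset.mem_coe.mp hS)
            have hS2' : S' ⊆ ((Finset.range N).erase a).erase b :=
              Finset.mem_powerset.mp (Finset.mem_coe.mp hS')
            have haS : a ∉ S := fun hc =>
              (Finset.mem_erase.mp (Finset.mem_erase.mp (hS2 hc)).2).1 rfl
            have haS' : a ∉ S' := fun hc =>
              (Finset.mem_erase.mp (Finset.mem_erase.mp (hS2' hc)).2).1 rfl
            have hins' : insert a S = insert a S' := hins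
            have h5 : (insert a S).erase a = (insert a S').erase a := by rw [hins']
            rwa [Finset.erase_insert haS, Finset.erase_insert haS'] at h5
        · have : ((Finset.range N).powerset).filter (fun A => v ∈ shiftInd N A)
              = (Finset.range N).powerset := by
            apply Finset.filter_true_of_mem
            intro A _
            exact mem_filter.mpr ⟨mem_univ _, Or.inl hv⟩
          rw [this, Finset.card_powerset, Finset.card_range]
          exact Nat.pow_le_pow_right (by norm_num) (by omega)
      have hcast : (2:ℝ) ^ (N - 2)
          ≤ ((((Finset.range N).powerset).filter (fun A => v ∈ shiftInd N A)).card : ℝ) := by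
        exact_mod_cast hbound
      have hpow : (4:ℝ) / 2^N * 2^(N-2) = 1 := by
        have h4 : (2:ℝ)^N = 2^(N-2) * 4 := by
          rw [show N = (N - 2) + 2 by omega, pow_add]
          norm_num
        rw [h4]
        have h2 : (0:ℝ) < 2^(N-2) := by positivity
        field_simp
      calc (1:ℝ) = 4 / 2^N * 2^(N-2) := hpow.symm
      _ ≤ 4 / 2^N * ((((Finset.range N).powerset).filter
            (fun A => v ∈ shiftInd N A)).card : ℝ) := by
          apply mul_le_mul_of_nonneg_left hcast
          positivity
    · have h1 : ∑ B : Finset (Fin (N * N)), shiftX N B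
          = ∑ B ∈ univ.filter (fun _ : Finset (Fin (N * N)) => True), shiftX N B := by
        simp
      rw [h1, shiftX_sum_filter N (fun _ => True)]
      have h2 : (((Finset.range N).powerset).filter
          (fun _ : Finset ℕ => True)).card = 2 ^ N := by
        simp [Finset.card_powerset, Finset.card_range]
      rw [h2]
      have h3 : (0:ℝ) < 2 ^ N := by positivity
      push_cast
      field_simp

end Shift

/-- star and circular dichromatic number can exceed the fractional
dichromatic number by an arbitrarily large amount. -/
theorem stmt12 (C : ℝ) (hC : 0 < C) :
    ∃ (n : ℕ) (E : Fin n → Fin n → Prop), 0 < n ∧ (∀ v, ¬ E v v) ∧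
      starDichromatic E - fracDichromatic E
        = circularDichromatic E - fracDichromatic E ∧
      C ≤ circularDichromatic E - fracDichromatic E := by
  classical
  set m : ℕ := ⌈C⌉₊ + 5 with hm
  have hNpos : 0 < 2 ^ m := Nat.pow_pos (n := m) (by norm_num)
  have hnpos : 0 < 2 ^ m * 2 ^ m := Nat.mul_pos hNpos hNpos
  refine ⟨2 ^ m * 2 ^ m, shiftE (2 ^ m), hnpos, shiftE_irrefl _, ?_, ?_⟩
  · have heq : starDichromatic (shiftE (2 ^ m)) = circularDichromatic (shiftE (2 ^ m)) := by
      unfold starDichromatic circularDichromatic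
      rw [starSet_eq_circSet (shiftE (2 ^ m)) (shiftE_symm _) (shiftE_irrefl _)]
    rw [heq]
  · have hN2 : 2 ≤ 2 ^ m := by
      calc 2 = 2 ^ 1 := rfl
      _ ≤ 2 ^ m := Nat.pow_le_pow_right (by norm_num) (by omega)
    have hfrac : fracDichromatic (shiftE (2 ^ m)) ≤ 4 := frac_upper _ hN2
    have hcl : ((m : ℕ) : ℝ) - 1 ≤ circularDichromatic (shiftE (2 ^ m)) := by
      rw [circularDichromatic]
      apply le_csInf
      · exact ⟨((2 ^ m * 2 ^ m : ℕ) : ℝ), circSet_mem _ hnpos _ (shiftE_irrefl _)⟩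
      · rintro p ⟨hp1, c, hc⟩
        exact circ_lower m (2 ^ m) hNpos le_rfl p hp1 c hc
    have hceil : C ≤ (⌈C⌉₊ : ℝ) := Nat.le_ceil C
    have hm5 : ((m : ℕ) : ℝ) = (⌈C⌉₊ : ℝ) + 5 := by rw [hm]; push_cast; ring
    linarith
end

section
/- Let D be a loopless digraph and let D^s be the digraph obtained from D by adding one new vertex s together with an arc (s,v) for every v ∈ V(D) (so s is a dominating source). Then χ⃗_c(D^s) = χ⃗(D), the dichromatic number of D. -/
open Finset

variable {V : Type*}

section AuxStmt14

variable {V : Type*}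

lemma aux14_coe_eq {p x y : ℝ} :
    (x : AddCircle p) = (y : AddCircle p) ↔ ∃ n : ℤ, n * p = x - y := by
  constructor
  · intro h
    have h2 : ((x - y : ℝ) : AddCircle p) = 0 := by
      rw [AddCircle.coe_sub, h, sub_self]
    rcases (AddCircle.coe_eq_zero_iff p).1 h2 with ⟨n, hn⟩
    exact ⟨n, by simpa [zsmul_eq_mul] using hn⟩
  · rintro ⟨n, hn⟩
    have h2 : ((x - y : ℝ) : AddCircle p) = 0 :=
      (AddCircle.coe_eq_zero_iff p).2 ⟨n, by simpa [zsmul_eq_mul] using hn⟩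
    rw [AddCircle.coe_sub, sub_eq_zero] at h2
    exact h2

lemma aux14_inj {p x y : ℝ} (hp : 0 < p) (h : (x : AddCircle p) = y)
    (hxy : |x - y| < p) : x = y := by
  rcases aux14_coe_eq.1 h with ⟨n, hn⟩
  have hn0 : n = 0 := by
    by_contra h0
    have h1 : (1 : ℝ) ≤ |(n : ℝ)| := by
      have : (1 : ℤ) ≤ |n| := Int.one_le_abs h0
      calc (1:ℝ) ≤ (|n| : ℤ) := by exact_mod_cast this
        _ = |(n:ℝ)| := by push_cast; rfl
    have : p ≤ |x - y| := by
      calc p = 1 * p := (one_mul p).symm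
        _ ≤ |(n:ℝ)| * p := by nlinarith
        _ = |(n:ℝ) * p| := by rw [abs_mul, abs_of_pos hp]
        _ = |x - y| := by rw [hn]
    linarith
  have : x - y = 0 := by rw [← hn, hn0]; simp
  linarith

lemma aux14_step {p r δ : ℝ} (hp : 1 ≤ p) (hr1 : 1 ≤ r) (hrp : r < p) (hδ : |δ| < 1)
    (h : (r : AddCircle p) = (δ : AddCircle p)) : δ ≤ 0 := by
  rcases aux14_coe_eq.1 h with ⟨n, hn⟩
  have hδ1 : -1 < δ := by cases abs_lt.1 hδ; linarith
  have hδ2 : δ < 1 := (abs_lt.1 hδ).2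
  have hpos : (0 : ℝ) < n * p := by rw [hn]; linarith
  have hn1 : 1 ≤ n := by
    by_contra hcon
    push_neg at hcon
    have : n ≤ 0 := by omega
    have : (n : ℝ) * p ≤ 0 := mul_nonpos_of_nonpos_of_nonneg (by exact_mod_cast this) (by linarith)
    linarith
  have hub : (n : ℝ) * p < p + 1 := by rw [hn]; linarith
  have hn2 : n < 2 := by
    by_contra hcon
    push_neg at hcon
    have : (2 : ℝ) ≤ (n : ℝ) := by exact_mod_cast hcon
    nlinarith
  have : n = 1 := by omega
  rw [this] at hn
  push_cast at hn
  linarith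

lemma aux14_chain_pred {R : V → V → Prop} :
    ∀ {L : List V} {v b : V}, List.Chain R v L → b ∈ L → ∃ a, R a b := by
  intro L
  induction L with
  | nil => simp
  | cons c L ih =>
    intro v b h hb
    rcases List.chain_cons.1 h with ⟨h1, h2⟩
    rcases List.mem_cons.1 hb with rfl | hb
    · exact ⟨v, h1⟩
    · exact ih h2 hb

lemma aux14_chain_le_head {f : V → ℝ} :
    ∀ {L : List V} {v : V}, List.Chain (fun a b => f b ≤ f a) v L → ∀ x ∈ L, f x ≤ f v := by
  intro L
  induction L with
  | nil => simp
  | cons c L ih =>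
    intro v h x hx
    rcases List.chain_cons.1 h with ⟨h1, h2⟩
    rcases List.mem_cons.1 hx with rfl | hx
    · exact h1
    · exact le_trans (ih h2 x hx) h1

lemma aux14_chain_le_last {f : V → ℝ} :
    ∀ (L : List V) (v w : V), List.Chain (fun a b => f b ≤ f a) v (L ++ [w]) → f w ≤ f v := by
  intro L
  induction L with
  | nil => intro v w h; simpa using (List.chain_cons.1 h).1
  | cons c L ih =>
    intro v w h
    rcases List.chain_cons.1 h with ⟨h1, h2⟩
    exact le_trans (ih c w h2) h1

lemma aux14_chain_imp_on {R S : V → V → Prop} {P : V → Prop}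
    (hRS : ∀ a b, P a → P b → R a b → S a b) :
    ∀ {L : List V} {v : V}, List.Chain R v L → P v → (∀ x ∈ L, P x) → List.Chain S v L := by
  intro L
  induction L with
  | nil => intro v _ _ _; exact List.Chain.nil
  | cons c L ih =>
    intro v h hv hall
    rcases List.chain_cons.1 h with ⟨h1, h2⟩
    have hc : P c := hall c List.mem_cons_self
    exact List.chain_cons.2 ⟨hRS v c hv hc h1, ih h2 hc (fun x hx => hall x (List.mem_cons_of_mem c hx))⟩

lemma aux14_chain_cycle_const {f : V → ℝ} {l : List V} {v : V}
    (h : List.Chain (fun a b => f b ≤ f a) v (l ++ [v])) : ∀ x ∈ l, f x = f v := by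
  intro x hx
  have h1 : f x ≤ f v := aux14_chain_le_head h x (List.mem_append_left _ hx)
  rcases List.append_of_mem hx with ⟨s, t, rfl⟩
  have hsplit : List.Chain (fun a b => f b ≤ f a) v ((s ++ [x]) ++ (t ++ [v])) := by
    simpa [List.append_assoc] using h
  have h2 : List.Chain (fun a b => f b ≤ f a) x (t ++ [v]) := by
    have := (List.isChain_cons_split (a := v) (c := x) (l₁ := s) (l₂ := t ++ [v])).1 (by simpa [List.Chain, List.append_assoc] using h)
    exact this.2
  exact le_antisymm h1 (aux14_chain_le_last t x v h2)

lemma aux14_acyclicOn_subsingleton {E : V → V → Prop} (hE : ∀ v, ¬ E v v) {A : Set V}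
    (hA : A.Subsingleton) : AcyclicOn E A := by
  intro v l hcyc hall
  rcases hcyc with ⟨hnd, hch⟩
  cases l with
  | nil => exact hE v (List.isChain_cons_cons.1 hch).1
  | cons a l' =>
    have hv : v ∈ A := hall v List.mem_cons_self
    have ha : a ∈ A := hall a (by simp)
    have : v = a := hA hv ha
    have : v ∈ a :: l' := this ▸ (List.mem_cons_self (a := a) (l := l'))
    exact (List.nodup_cons.1 hnd).1 this

lemma aux14_all_some : ∀ (l : List (Option V)), (∀ x ∈ l, x ≠ none) →
    ∃ l₀ : List V, l = l₀.map some := by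
  intro l
  induction l with
  | nil => exact fun _ => ⟨[], rfl⟩
  | cons a l ih =>
    intro h
    rcases ih (fun x hx => h x (List.mem_cons_of_mem a hx)) with ⟨l₀, rfl⟩
    cases a with
    | none => exact absurd rfl (h none List.mem_cons_self)
    | some a₀ => exact ⟨a₀ :: l₀, rfl⟩

lemma aux14_dicycle_addSource {E : V → V → Prop} {v : Option V} {l : List (Option V)}
    (h : IsDicycle (addSource E) v l) :
    ∃ v₀ l₀, v = some v₀ ∧ l = l₀.map some ∧ IsDicycle E v₀ l₀ := by
  rcases h with ⟨hnd, hch⟩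
  have hnone : ∀ x ∈ v :: l, x ≠ none := by
    intro x hx hxn
    subst hxn
    have hmem : (none : Option V) ∈ l ++ [v] := by
      rcases List.mem_cons.1 hx with rfl | hx
      · exact List.mem_append_right _ (List.mem_singleton_self _)
      · exact List.mem_append_left _ hx
    rcases aux14_chain_pred hch hmem with ⟨a, ha⟩
    cases a <;> exact ha
  have hv : v ≠ none := hnone v List.mem_cons_self
  rcases Option.ne_none_iff_exists'.1 hv with ⟨v₀, rfl⟩
  rcases aux14_all_some l (fun x hx => hnone x (List.mem_cons_of_mem _ hx)) with ⟨l₀, rfl⟩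
  refine ⟨v₀, l₀, rfl, rfl, ?_, ?_⟩
  · have : ((v₀ :: l₀).map some).Nodup := by simpa using hnd
    exact this.of_map
  · have : List.Chain (addSource E) (some v₀) ((l₀ ++ [v₀]).map some) := by
      simpa using hch
    have := (List.isChain_map some (l := v₀ :: (l₀ ++ [v₀]))).1 this
    exact this.imp (fun a b hab => hab)

lemma aux14_dicycle_map_some {E : V → V → Prop} {v : V} {l : List V} (h : IsDicycle E v l) :
    IsDicycle (addSource E) (some v) (l.map some) := by
  rcases h with ⟨hnd, hch⟩
  constructor
  · have : ((v :: l).map some).Nodup := hnd.map (Option.some_injective V)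
    simpa using this
  · have : List.Chain (addSource E) (some v) ((l ++ [v]).map some) :=
      (List.isChain_map some (l := v :: (l ++ [v]))).2 (List.IsChain.imp (fun a b hab => hab) hch)
    simpa using this

end AuxStmt14

/-- adding a dominating source makes the circular dichromatic number
equal to the dichromatic number: `χ⃗_c(D^s) = χ⃗(D)`. -/
theorem stmt14 {V : Type*} [Fintype V] [Nonempty V] (E : V → V → Prop)
    (hE : ∀ v, ¬ E v v) :
    circularDichromatic (addSource E) = (dichromatic E : ℝ) := by
  classical
  set T : Set ℕ := {k : ℕ | ∃ c : V → Fin k, ∀ i : Fin k, AcyclicOn E (c ⁻¹' {i})} with hT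
  have hTne : T.Nonempty := by
    refine ⟨Fintype.card V, Fintype.equivFin V, fun i => ?_⟩
    apply aux14_acyclicOn_subsingleton hE
    intro a ha b hb
    simp only [Set.mem_preimage, Set.mem_singleton_iff] at ha hb
    exact (Fintype.equivFin V).injective (ha.trans hb.symm)
  have hkT : dichromatic E ∈ T := Nat.sInf_mem hTne
  set k := dichromatic E with hkdef
  obtain ⟨c₀, hc₀⟩ := hkT
  have hk1 : 1 ≤ k := by
    rcases Nat.eq_zero_or_pos k with h0 | h
    · exfalso
      rw [h0] at c₀
      exact (c₀ (Classical.arbitrary V)).elim0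
    · exact h
  have hkR : (0:ℝ) < (k:ℝ) := by exact_mod_cast hk1
  set S : Set ℝ := {p : ℝ | 1 ≤ p ∧
    ∃ c : Option V → AddCircle p, IsWeakCircularColouring (addSource E) p c} with hS
  set cc : Option V → AddCircle (k:ℝ) :=
    fun o => Option.elim o 0 (fun v => (((c₀ v : ℕ) : ℝ) : AddCircle (k:ℝ))) with hcc
  have hmem : (k : ℝ) ∈ S := by
    refine ⟨by exact_mod_cast hk1, cc, ?_, ?_⟩
    · intro u w huw
      rcases u with _ | u <;> rcases w with _ | w
      · exact absurd huw (by simp [addSource])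
      · -- none → some w
        by_cases h0 : (c₀ w : ℕ) = 0
        · left
          show (0 : AddCircle (k:ℝ)) = _
          simp [hcc, h0]
        · right
          have hwlt : (c₀ w : ℕ) < k := (c₀ w).isLt
          refine ⟨((c₀ w : ℕ) : ℝ), ⟨by positivity, by exact_mod_cast hwlt⟩, ?_, ?_⟩
          · show _ = cc (some w) - cc none
            simp [hcc]
          · exact_mod_cast Nat.one_le_iff_ne_zero.2 h0
      · exact absurd huw (by simp [addSource])
      · -- some u → some w
        have hEuw : E u w := huw
        have halt : (c₀ u : ℕ) < k := (c₀ u).isLt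
        have hblt : (c₀ w : ℕ) < k := (c₀ w).isLt
        rcases lt_trichotomy ((c₀ u : ℕ)) ((c₀ w : ℕ)) with hab | hab | hab
        · right
          refine ⟨((c₀ w : ℕ) : ℝ) - ((c₀ u : ℕ) : ℝ), ⟨?_, ?_⟩, ?_, ?_⟩
          · have : ((c₀ u : ℕ) : ℝ) ≤ ((c₀ w : ℕ) : ℝ) := by exact_mod_cast hab.le
            linarith
          · have h1 : ((c₀ w : ℕ) : ℝ) < (k:ℝ) := by exact_mod_cast hblt
            have h2 : (0:ℝ) ≤ ((c₀ u : ℕ) : ℝ) := by positivity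
            linarith
          · show _ = cc (some w) - cc (some u)
            simp [hcc, AddCircle.coe_sub]
          · have : (c₀ u : ℕ) + 1 ≤ (c₀ w : ℕ) := hab
            have : ((c₀ u : ℕ) : ℝ) + 1 ≤ ((c₀ w : ℕ) : ℝ) := by exact_mod_cast this
            linarith
        · left
          show cc (some u) = cc (some w)
          simp [hcc, hab]
        · right
          refine ⟨((c₀ w : ℕ) : ℝ) + (k:ℝ) - ((c₀ u : ℕ) : ℝ), ⟨?_, ?_⟩, ?_, ?_⟩
          · have h1 : ((c₀ u : ℕ) : ℝ) < (k:ℝ) := by exact_mod_cast halt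
            have h2 : (0:ℝ) ≤ ((c₀ w : ℕ) : ℝ) := by positivity
            linarith
          · have : ((c₀ w : ℕ) : ℝ) < ((c₀ u : ℕ) : ℝ) := by exact_mod_cast hab
            linarith
          · show _ = cc (some w) - cc (some u)
            have hrw : ((c₀ w : ℕ) : ℝ) + (k:ℝ) - ((c₀ u : ℕ) : ℝ)
                = (((c₀ w : ℕ) : ℝ) - ((c₀ u : ℕ) : ℝ)) + (k:ℝ) := by ring
            rw [hrw, AddCircle.coe_add_period, AddCircle.coe_sub]
            simp [hcc]
          · have h1 : ((c₀ u : ℕ) : ℝ) + 1 ≤ (k:ℝ) := by exact_mod_cast halt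
            have h2 : (0:ℝ) ≤ ((c₀ w : ℕ) : ℝ) := by positivity
            linarith
    · intro t v l hcyc hall
      obtain ⟨v₀, l₀, rfl, rfl, hcyc₀⟩ := aux14_dicycle_addSource hcyc
      have hv0 : cc (some v₀) = t := hall (some v₀) List.mem_cons_self
      have hcol : ∀ x ∈ v₀ :: l₀, x ∈ c₀ ⁻¹' {c₀ v₀} := by
        intro x hx
        have hx' : cc (some x) = t := by
          apply hall (some x)
          rcases List.mem_cons.1 hx with rfl | hx
          · exact List.mem_cons_self
          · exact List.mem_cons_of_mem _ (List.mem_map_of_mem (f := some) hx)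
        have hco : (((c₀ x : ℕ) : ℝ) : AddCircle (k:ℝ)) = (((c₀ v₀ : ℕ) : ℝ) : AddCircle (k:ℝ)) := by
          have e1 : cc (some x) = (((c₀ x : ℕ) : ℝ) : AddCircle (k:ℝ)) := rfl
          have e2 : cc (some v₀) = (((c₀ v₀ : ℕ) : ℝ) : AddCircle (k:ℝ)) := rfl
          rw [← e1, ← e2, hx', hv0]
        have hxlt : ((c₀ x : ℕ) : ℝ) < (k:ℝ) := by exact_mod_cast (c₀ x).isLt
        have hvlt : ((c₀ v₀ : ℕ) : ℝ) < (k:ℝ) := by exact_mod_cast (c₀ v₀).isLt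
        have hx0 : (0:ℝ) ≤ ((c₀ x : ℕ) : ℝ) := by positivity
        have hv00 : (0:ℝ) ≤ ((c₀ v₀ : ℕ) : ℝ) := by positivity
        have heq : ((c₀ x : ℕ) : ℝ) = ((c₀ v₀ : ℕ) : ℝ) :=
          aux14_inj hkR hco (abs_lt.2 ⟨by linarith, by linarith⟩)
        have : (c₀ x : ℕ) = (c₀ v₀ : ℕ) := by exact_mod_cast heq
        simpa [Set.mem_preimage, Set.mem_singleton_iff] using Fin.ext this
      exact hc₀ (c₀ v₀) v₀ l₀ hcyc₀ hcol
  have hlb : ∀ p ∈ S, (k : ℝ) ≤ p := by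
    rintro p ⟨hp1, c, hc⟩
    have hp0 : (0:ℝ) < p := lt_of_lt_of_le one_pos hp1
    have hρex : ∀ v : V, ∃ r : ℝ, 1 ≤ r ∧ r ≤ p ∧ (r : AddCircle p) = c (some v) - c none := by
      intro v
      rcases hc.1 none (some v) trivial with h | ⟨r, hr, hcoe, hr1⟩
      · exact ⟨p, hp1, le_refl p, by rw [AddCircle.coe_period, ← h, sub_self]⟩
      · exact ⟨r, hr1, le_of_lt hr.2, hcoe⟩
    choose ρ hρ1 hρp hρc using hρex
    set N := ⌊p⌋₊ with hN
    have hN1 : 1 ≤ N := Nat.le_floor (by exact_mod_cast hp1)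
    have hfl : ∀ v, 1 ≤ ⌊ρ v⌋₊ := fun v => Nat.le_floor (by exact_mod_cast hρ1 v)
    set g : V → Fin N := fun v => ⟨min (⌊ρ v⌋₊) N - 1, by
      have h1 := Nat.min_le_right (⌊ρ v⌋₊) N; omega⟩ with hg
    have hbounds : ∀ v, ((min (⌊ρ v⌋₊) N : ℕ) : ℝ) ≤ ρ v ∧ ρ v < ((min (⌊ρ v⌋₊) N : ℕ) : ℝ) + 1 := by
      intro v
      constructor
      · calc ((min (⌊ρ v⌋₊) N : ℕ) : ℝ) ≤ ((⌊ρ v⌋₊ : ℕ) : ℝ) := by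
              exact_mod_cast Nat.min_le_left _ _
          _ ≤ ρ v := Nat.floor_le (by linarith [hρ1 v])
      · rcases le_or_gt (⌊ρ v⌋₊) N with h | h
        · rw [min_eq_left h]
          exact Nat.lt_floor_add_one (ρ v)
        · rw [min_eq_right h.le]
          calc ρ v ≤ p := hρp v
            _ < (N:ℝ) + 1 := by exact_mod_cast Nat.lt_floor_add_one p
    have hsame : ∀ u w : V, g u = g w → min (⌊ρ u⌋₊) N = min (⌊ρ w⌋₊) N := by
      intro u w h
      have hval : min (⌊ρ u⌋₊) N - 1 = min (⌊ρ w⌋₊) N - 1 := congrArg Fin.val h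
      have h1 : 1 ≤ min (⌊ρ u⌋₊) N := le_min (hfl u) hN1
      have h2 : 1 ≤ min (⌊ρ w⌋₊) N := le_min (hfl w) hN1
      omega
    have hgfib : ∀ i : Fin N, AcyclicOn E (g ⁻¹' {i}) := by
      intro i v l hcyc hall
      have hallg : ∀ x ∈ v :: l, g x = i := fun x hx => hall x hx
      have hstep : ∀ a b : V, g a = i → g b = i → E a b → ρ b ≤ ρ a := by
        intro a b hga hgb hab
        have hmm : min (⌊ρ a⌋₊) N = min (⌊ρ b⌋₊) N := hsame a b (hga.trans hgb.symm)
        obtain ⟨hla, hua⟩ := hbounds a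
        obtain ⟨hlb', hub'⟩ := hbounds b
        rw [hmm] at hla hua
        have hδ : |ρ b - ρ a| < 1 := abs_lt.2 ⟨by linarith, by linarith⟩
        rcases hc.1 (some a) (some b) hab with heq | ⟨r, hr, hcoe, hr1⟩
        · have hac : (ρ a : AddCircle p) = (ρ b : AddCircle p) := by
            rw [hρc a, hρc b, heq]
          have := aux14_inj hp0 hac (by
            have : |ρ a - ρ b| < 1 := by rw [abs_sub_comm]; exact hδ
            linarith)
          linarith [this.le]
        · have hcoe2 : (r : AddCircle p) = ((ρ b - ρ a : ℝ) : AddCircle p) := by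
            rw [hcoe, AddCircle.coe_sub, hρc a, hρc b]
            abel
          have := aux14_step hp1 hr1 hr.2 hδ hcoe2
          linarith
      have hchain : List.Chain (fun a b => ρ b ≤ ρ a) v (l ++ [v]) := by
        refine aux14_chain_imp_on (P := fun x => g x = i) hstep hcyc.2
          (hallg v List.mem_cons_self) ?_
        intro x hx
        rcases List.mem_append.1 hx with hx | hx
        · exact hallg x (List.mem_cons_of_mem _ hx)
        · rw [List.mem_singleton.1 hx]
          exact hallg v List.mem_cons_self
      have hconst : ∀ x ∈ l, ρ x = ρ v := aux14_chain_cycle_const hchain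
      have hfib : ∀ x ∈ v :: l, c (some x) = c none + ((ρ v : ℝ) : AddCircle p) := by
        intro x hx
        have hx' : ρ x = ρ v := by
          rcases List.mem_cons.1 hx with rfl | hx
          · rfl
          · exact hconst x hx
        have h1 := hρc x
        rw [hx'] at h1
        exact (sub_eq_iff_eq_add'.1 h1.symm)
      refine hc.2 (c none + ((ρ v : ℝ) : AddCircle p)) (some v) (l.map some)
        (aux14_dicycle_map_some hcyc) ?_
      intro y hy
      rcases List.mem_cons.1 hy with rfl | hy
      · exact hfib v List.mem_cons_self
      · rcases List.mem_map.1 hy with ⟨x, hx, rfl⟩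
        exact hfib x (List.mem_cons_of_mem _ hx)
    have hkN : k ≤ N := Nat.sInf_le ⟨g, hgfib⟩
    calc (k:ℝ) ≤ (N:ℝ) := by exact_mod_cast hkN
      _ ≤ p := Nat.floor_le hp0.le
  have hcd : circularDichromatic (addSource E) = sInf S := rfl
  rw [hcd]
  exact le_antisymm (csInf_le ⟨(k:ℝ), hlb⟩ hmem) (le_csInf ⟨(k:ℝ), hmem⟩ hlb)
end

section
/- For every n ≥ 3, let C⃗_n^s be the digraph obtained from the directed cycle C⃗_n by adding one new vertex s together with an arc from s to every vertex of C⃗_n. Then χ⃗*(C⃗_n^s) = n/(n−1) < 2 = χ⃗_c(C⃗_n^s). -/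
open Finset

variable {V : Type*}

section Helpers

variable {n : ℕ}

lemma acyclicOn_of_mono {V : Type*} (E : V → V → Prop) (A : Set V) (φ : V → ℕ)
    (h : ∀ u w, E u w → u ∈ A → w ∈ A → φ u < φ w) : AcyclicOn E A := by
  intro v l hdc hall
  obtain ⟨_, hch⟩ := hdc
  have aux : ∀ (l' : List V) (v : V), List.Chain E v l' → v ∈ A → (∀ x ∈ l', x ∈ A) →
      ∀ (hne : l' ≠ []), φ v < φ (l'.getLast hne) := by
    intro l'
    induction l' with
    | nil => intro v _ _ _ hne; exact absurd rfl hne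
    | cons x rest ih =>
      intro v hch hv hall _
      unfold List.Chain at hch
      rw [List.chain_cons] at hch
      have hx : x ∈ A := hall x List.mem_cons_self
      have h1 : φ v < φ x := h v x hch.1 hv hx
      cases rest with
      | nil => simpa using h1
      | cons y t =>
        have h2 := ih x hch.2 hx (fun z hz => hall z (List.mem_cons_of_mem _ hz)) (by simp)
        rw [List.getLast_cons (by simp)]
        exact h1.trans h2
  have hv : v ∈ A := hall v List.mem_cons_self
  have hall' : ∀ x ∈ l ++ [v], x ∈ A := by
    intro x hx
    rcases List.mem_append.1 hx with h1 | h1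
    · exact hall x (List.mem_cons_of_mem _ h1)
    · have : x = v := by simpa using h1
      exact this ▸ hv
  have hne : l ++ [v] ≠ [] := by simp
  have hlast := aux (l ++ [v]) v hch hv hall' hne
  rw [List.getLast_append] at hlast
  exact lt_irrefl _ hlast

lemma dicycle_canon (n : ℕ) [NeZero n] :
    ∃ v l, IsDicycle (addSource (dirCycle n)) v l ∧
      (∀ x ∈ v :: l, ∃ i : ZMod n, x = some i) ∧
      (∀ i : ZMod n, some i ∈ v :: l) := by
  have hn1 : 1 ≤ n := Nat.one_le_iff_ne_zero.2 (NeZero.ne n)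
  set f : ℕ → Option (ZMod n) := fun t => some ((t : ℕ) : ZMod n) with hf
  refine ⟨f 0, (List.range (n-1)).map (fun t => f (t+1)), ⟨?_, ?_⟩, ?_, ?_⟩
  case _ =>
    -- Nodup
    have hlist : f 0 :: (List.range (n-1)).map (fun t => f (t+1)) = (List.range n).map f := by
      rw [show List.range n = List.range ((n-1)+1) from by congr 1; omega, List.range_succ_eq_map]
      simp [List.map_map, Function.comp_def]
    rw [hlist]
    refine List.Nodup.map_on ?_ List.nodup_range
    intro t1 h1 t2 h2 heq
    rw [List.mem_range] at h1 h2
    have := Option.some.inj heq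
    have := congrArg ZMod.val this
    rwa [ZMod.val_cast_of_lt h1, ZMod.val_cast_of_lt h2] at this
  case _ =>
    -- Chain
    have h2 : (List.range (n-1)).map (fun t => f (t+1)) ++ [f 0] =
        (List.range n).map (fun t => f (t+1)) := by
      rw [show List.range n = List.range ((n-1)+1) from by congr 1; omega, List.range_succ, List.map_append]
      simp only [List.map_cons, List.map_nil, hf]
      congr 2
      rw [show (n-1)+1 = n by omega]
      simp [ZMod.natCast_self]
    rw [h2]
    have h3 : f 0 :: ((List.range n).map (fun t => f (t+1))) = (List.range (n+1)).map f := by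
      rw [List.range_succ_eq_map, List.map_cons, List.map_map]
      rfl
    have hch : List.Chain' (addSource (dirCycle n)) ((List.range (n+1)).map f) := by
      unfold List.Chain'
      rw [List.isChain_map, List.isChain_range_succ]
      intro m _
      show dirCycle n ((m : ℕ) : ZMod n) (((m+1 : ℕ) : ℕ) : ZMod n)
      show (((m+1 : ℕ) : ℕ) : ZMod n) = ((m : ℕ) : ZMod n) + 1
      push_cast
      ring
    rw [← h3] at hch
    exact hch
  case _ =>
    intro x hx
    have hlist : f 0 :: (List.range (n-1)).map (fun t => f (t+1)) = (List.range n).map f := by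
      rw [show List.range n = List.range ((n-1)+1) from by congr 1; omega, List.range_succ_eq_map]
      simp [List.map_map, Function.comp_def]
    rw [hlist] at hx
    obtain ⟨t, _, rfl⟩ := List.mem_map.1 hx
    exact ⟨_, rfl⟩
  case _ =>
    intro i
    have hlist : f 0 :: (List.range (n-1)).map (fun t => f (t+1)) = (List.range n).map f := by
      rw [show List.range n = List.range ((n-1)+1) from by congr 1; omega, List.range_succ_eq_map]
      simp [List.map_map, Function.comp_def]
    rw [hlist]
    refine List.mem_map.2 ⟨i.val, List.mem_range.2 (ZMod.val_lt i), ?_⟩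
    simp [hf, ZMod.natCast_rightInverse i]

lemma not_acyclicOn [NeZero n] {A : Set (Option (ZMod n))} (h : ∀ i, some i ∈ A) :
    ¬ AcyclicOn (addSource (dirCycle n)) A := by
  obtain ⟨v, l, hd, hshape, _⟩ := dicycle_canon n
  intro hac
  exact hac v l hd (fun x hx => by obtain ⟨i, rfl⟩ := hshape x hx; exact h i)

lemma zmod_val_sub_one [NeZero n] {x : ZMod n} (hx : x ≠ 0) :
    (x - 1).val = x.val - 1 ∧ 1 ≤ x.val := by
  have h1 : 1 ≤ x.val := by
    rcases Nat.eq_zero_or_pos x.val with h | h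
    · exact absurd ((ZMod.val_eq_zero x).1 h) hx
    · exact h
  have hlt : x.val < n := ZMod.val_lt x
  have hcast : ((x.val : ℕ) : ZMod n) = x := ZMod.natCast_rightInverse x
  have hsub : x - 1 = ((x.val - 1 : ℕ) : ZMod n) := by
    rw [Nat.cast_sub h1, hcast, Nat.cast_one]
  rw [hsub, ZMod.val_cast_of_lt (by omega)]
  exact ⟨rfl, h1⟩

lemma acyclicOn_iff [NeZero n] {A : Set (Option (ZMod n))} :
    AcyclicOn (addSource (dirCycle n)) A ↔ ∃ i, some i ∉ A := by
  constructor
  · intro h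
    by_contra hc
    push_neg at hc
    exact not_acyclicOn hc h
  · rintro ⟨i, hi⟩
    apply acyclicOn_of_mono _ _
      (fun x => match x with | none => 0 | some j => (j - i - 1).val + 1)
    intro u w hE hu hw
    match u, w with
    | none, none => exact hE.elim
    | some _, none => exact hE.elim
    | none, some j => simp
    | some u', some w' =>
      have hw' : w' = u' + 1 := hE
      subst hw'
      have hne : u' ≠ i := fun h => hi (h ▸ hu)
      have hx0 : u' - i ≠ 0 := sub_ne_zero.2 hne
      obtain ⟨hv, h1⟩ := zmod_val_sub_one hx0
      simp only []
      have heq : u' + 1 - i - 1 = u' - i := by ring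
      rw [heq]
      have := ZMod.val_lt (u' - i)
      omega
lemma gap_lemma (S : Finset ℝ) (hS : S.Nonempty) (gp : ℝ) (hgp : 0 ≤ gp)
    (h : ((S.card : ℝ) - 1) * gp < S.max' hS - S.min' hS) :
    ∃ x ∈ S, x < S.max' hS ∧ ∀ y ∈ S, ¬(x < y ∧ y ≤ x + gp) := by
  by_contra hc
  push_neg at hc
  classical
  have key : ∀ k : ℕ, ∀ x ∈ S, (S.filter (fun y => x < y)).card ≤ k →
      S.max' hS ≤ x + (k : ℝ) * gp := by
    intro k
    induction k with
    | zero =>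
      intro x hx hcard
      have hmax : S.max' hS ≤ x := by
        by_contra hmax
        push_neg at hmax
        have hmem : S.max' hS ∈ S.filter (fun y => x < y) :=
          Finset.mem_filter.2 ⟨S.max'_mem hS, hmax⟩
        have := Finset.card_pos.2 ⟨_, hmem⟩
        omega
      simpa using hmax
    | succ k ih =>
      intro x hx hcard
      rcases lt_or_ge x (S.max' hS) with hlt | hle
      · obtain ⟨y, hy, hxy, hyx⟩ := hc x hx hlt
        have hsub : S.filter (fun z => y < z) ⊆ (S.filter (fun z => x < z)).erase y := by
          intro z hz
          rw [Finset.mem_filter] at hz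
          rw [Finset.mem_erase, Finset.mem_filter]
          exact ⟨fun hzy => absurd (hzy ▸ hz.2) (lt_irrefl y), hz.1, hxy.trans hz.2⟩
        have hycard : (S.filter (fun z => y < z)).card ≤ k := by
          have h1 := Finset.card_le_card hsub
          have h2 : y ∈ S.filter (fun z => x < z) := Finset.mem_filter.2 ⟨hy, hxy⟩
          have h3 := Finset.card_erase_of_mem h2
          have h4 := Finset.card_pos.2 ⟨_, h2⟩
          omega
        have hih := ih y hy hycard
        push_cast
        linarith
      · have : (0:ℝ) ≤ ((k:ℝ)+1) * gp := by positivity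
        push_cast
        linarith
  have hcard1 : 1 ≤ S.card := Finset.card_pos.2 hS
  have hsub : S.filter (fun y => S.min' hS < y) ⊆ S.erase (S.min' hS) := by
    intro z hz
    rw [Finset.mem_filter] at hz
    exact Finset.mem_erase.2 ⟨ne_of_gt hz.2, hz.1⟩
  have hcc : (S.filter (fun y => S.min' hS < y)).card ≤ S.card - 1 := by
    have := Finset.card_le_card hsub
    have := Finset.card_erase_of_mem (S.min'_mem hS)
    omega
  have h1 := key (S.card - 1) (S.min' hS) (S.min'_mem hS) hcc
  have hc1 : ((S.card - 1 : ℕ) : ℝ) = (S.card : ℝ) - 1 := by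
    push_cast [hcard1]
    ring
  rw [hc1] at h1
  linarith

lemma coe_rep {p : ℝ} [Fact (0 < p)] (z : AddCircle p) :
    (((AddCircle.equivIco p 0 z : ℝ)) : AddCircle p) = z :=
  (AddCircle.equivIco p 0).symm_apply_apply z

lemma rep_unique {p : ℝ} [Fact (0 < p)] {r s : ℝ} (hr : r ∈ Set.Ico (0:ℝ) p)
    (hs : s ∈ Set.Ico (0:ℝ) p) (h : ((r : ℝ) : AddCircle p) = ((s : ℝ) : AddCircle p)) :
    r = s := by
  have hr' : r ∈ Set.Ico (0:ℝ) (0 + p) := by simpa using hr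
  have hs' : s ∈ Set.Ico (0:ℝ) (0 + p) := by simpa using hs
  exact (AddCircle.coe_eq_coe_iff_of_mem_Ico hr' hs').1 h
lemma star_mem (n : ℕ) [NeZero n] (hn : 3 ≤ n) :
    1 ≤ (n:ℝ)/((n:ℝ)-1) ∧ ∃ c : Option (ZMod n) → AddCircle ((n:ℝ)/((n:ℝ)-1)),
      IsAcyclicColouring (addSource (dirCycle n)) ((n:ℝ)/((n:ℝ)-1)) c := by
  have hn3 : (3:ℝ) ≤ (n:ℝ) := by exact_mod_cast hn
  have hn1 : (0:ℝ) < (n:ℝ) - 1 := by linarith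
  set p : ℝ := (n:ℝ)/((n:ℝ)-1) with hp
  have hp1 : 1 ≤ p := by
    rw [hp, le_div_iff₀ hn1]; linarith
  refine ⟨hp1, fun x => match x with
    | none => 0
    | some i => (((i.val : ℝ)/((n:ℝ)-1) : ℝ) : AddCircle p), ?_⟩
  intro a
  rw [acyclicOn_iff]
  set b : ℝ := a * ((n:ℝ)-1) with hb
  refine ⟨((⌊b⌋ : ℤ) : ZMod n), ?_⟩
  intro hmem
  simp only [Set.mem_preimage] at hmem
  obtain ⟨x, hx, hxe⟩ := hmem
  set i : ZMod n := ((⌊b⌋ : ℤ) : ZMod n) with hi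
  have hxe' : ((x : ℝ) : AddCircle p) = (((i.val : ℝ)/((n:ℝ)-1) : ℝ) : AddCircle p) := hxe
  have hsub : ((x - (i.val : ℝ)/((n:ℝ)-1) : ℝ) : AddCircle p) = 0 := by
    rw [AddCircle.coe_sub, hxe', sub_self]
  rw [AddCircle.coe_eq_zero_iff] at hsub
  obtain ⟨m, hm⟩ := hsub
  rw [zsmul_eq_mul] at hm
  -- x = i.val/(n-1) + m*p
  have hxval : x = ((i.val : ℝ) + (m:ℝ) * n)/((n:ℝ)-1) := by
    have : x = (i.val : ℝ)/((n:ℝ)-1) + (m:ℝ) * p := by linarith [hm]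
    rw [this, hp]
    field_simp
  -- i.val ≡ ⌊b⌋ mod n
  have hicast : ((i.val : ℤ) : ZMod n) = ((⌊b⌋ : ℤ) : ZMod n) := by
    have h1 : ((i.val : ℤ) : ZMod n) = i := by
      push_cast
      exact ZMod.natCast_rightInverse i
    rw [h1]
  have hdvd : (n:ℤ) ∣ ((i.val : ℤ) - ⌊b⌋) := by
    rwa [← ZMod.intCast_zmod_eq_zero_iff_dvd, Int.cast_sub, sub_eq_zero]
  obtain ⟨t, ht⟩ := hdvd
  -- so i.val + m*n = ⌊b⌋ + (t+m)*n over ℝ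
  have hivr : ((i.val : ℤ) : ℝ) = (⌊b⌋ : ℝ) + (t:ℝ) * n := by
    have : (i.val : ℤ) = ⌊b⌋ + n * t := by linarith [ht]
    rw [this]; push_cast; ring
  set s : ℤ := t + m with hs
  have hxval2 : x = ((⌊b⌋ : ℝ) + (s:ℝ) * n)/((n:ℝ)-1) := by
    rw [hxval]
    push_cast at hivr ⊢
    rw [hivr, hs]
    push_cast
    ring_nf
  obtain ⟨hx1, hx2⟩ := hx
  have hb1 : (⌊b⌋:ℝ) ≤ b := Int.floor_le b
  have hb2 : b < (⌊b⌋:ℝ) + 1 := Int.lt_floor_add_one b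
  -- a < x gives b < ⌊b⌋ + s*n
  have hg1 : b < (⌊b⌋ : ℝ) + (s:ℝ) * n := by
    rw [hxval2] at hx1
    have := (lt_div_iff₀ hn1).1 hx1
    rw [hb] at *
    linarith
  have hg2 : (⌊b⌋ : ℝ) + (s:ℝ) * n < b + ((n:ℝ) - 1) := by
    rw [hxval2] at hx2
    have := (div_lt_iff₀ hn1).1 hx2
    rw [hb] at *
    nlinarith
  have hspos : (0:ℝ) < (s:ℝ) * n := by linarith
  have hs1 : 1 ≤ s := by
    by_contra hsneg
    push_neg at hsneg
    have : s ≤ 0 := by omega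
    have : (s:ℝ) ≤ 0 := by exact_mod_cast this
    nlinarith
  have hs1' : (1:ℝ) ≤ (s:ℝ) := by exact_mod_cast hs1
  nlinarith

set_option maxHeartbeats 2000000 in
lemma star_lb (n : ℕ) [NeZero n] (hn : 3 ≤ n) (p : ℝ) (hp1 : 1 ≤ p)
    (c : Option (ZMod n) → AddCircle p)
    (hc : IsAcyclicColouring (addSource (dirCycle n)) p c) :
    (n:ℝ)/((n:ℝ)-1) ≤ p := by
  classical
  have hn3 : (3:ℝ) ≤ (n:ℝ) := by exact_mod_cast hn
  have hn1 : (0:ℝ) < (n:ℝ) - 1 := by linarith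
  by_contra hlt
  push_neg at hlt
  have hp0 : 0 < p := by linarith
  haveI : Fact (0 < p) := ⟨hp0⟩
  set f : ZMod n → ℝ := fun i => ((AddCircle.equivIco p 0 (c (some i))) : ℝ) with hf
  have hfmem : ∀ i, f i ∈ Set.Ico (0:ℝ) p := by
    intro i
    have := (AddCircle.equivIco p 0 (c (some i))).2
    simpa using this
  have hfcoe : ∀ i, ((f i : ℝ) : AddCircle p) = c (some i) := fun i => coe_rep _
  set S : Finset ℝ := Finset.image f Finset.univ with hS
  have hSne : S.Nonempty := ⟨f 0, Finset.mem_image.2 ⟨0, Finset.mem_univ _, rfl⟩⟩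
  have hSmem : ∀ x ∈ S, x ∈ Set.Ico (0:ℝ) p := by
    intro x hx
    obtain ⟨j, _, rfl⟩ := Finset.mem_image.1 hx
    exact hfmem j
  -- main claim: exists lift with span < 1
  have claim : ∃ g : ZMod n → ℝ, (∀ i, ((g i : ℝ) : AddCircle p) = c (some i)) ∧
      ∀ (T : Finset ℝ) (hT : T.Nonempty), T = Finset.image g Finset.univ →
        T.max' hT - T.min' hT < 1 := by
    rcases lt_or_ge (S.max' hSne - S.min' hSne) 1 with hspan | hspan
    · exact ⟨f, hfcoe, fun T hT hTe => by subst hTe; simpa [hS] using hspan⟩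
    · -- apply gap lemma
      have hcard : S.card ≤ n := by
        calc S.card ≤ Finset.univ.card := Finset.card_image_le
        _ = n := by simp [ZMod.card n]
      have hkey : ((S.card : ℝ) - 1) * (p - 1) < S.max' hSne - S.min' hSne := by
        have h1 : ((S.card : ℝ) - 1) ≤ (n:ℝ) - 1 := by
          have : (S.card : ℝ) ≤ (n:ℝ) := by exact_mod_cast hcard
          linarith
        have h2 : ((n:ℝ) - 1) * (p - 1) < 1 := by
          have : ((n:ℝ) - 1) * (p - 1) < ((n:ℝ)-1) * ((n:ℝ)/((n:ℝ)-1) - 1) := by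
            apply mul_lt_mul_of_pos_left _ hn1
            linarith
          have heq : ((n:ℝ)-1) * ((n:ℝ)/((n:ℝ)-1) - 1) = 1 := by
            field_simp
            ring
          linarith
        have h3 : 0 ≤ p - 1 := by linarith
        nlinarith
      obtain ⟨x, hxS, hxM, hgap⟩ := gap_lemma S hSne (p-1) (by linarith) hkey
      have hx0 : 0 ≤ x := (hSmem x hxS).1
      have hMp : S.max' hSne < p := (hSmem _ (S.max'_mem hSne)).2
      have hMgap : x + (p - 1) < S.max' hSne := by
        have := hgap (S.max' hSne) (S.max'_mem hSne)
        push_neg at this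
        exact this hxM
      have hx1 : x < 1 := by linarith
      set g : ZMod n → ℝ := fun i => if f i ≤ x then f i + p else f i with hg
      have hgcoe : ∀ i, ((g i : ℝ) : AddCircle p) = c (some i) := by
        intro i
        rw [hg]
        by_cases hfi : f i ≤ x
        · simp only [if_pos hfi]
          rw [AddCircle.coe_add, AddCircle.coe_period, add_zero]
          exact hfcoe i
        · simp only [if_neg hfi]
          exact hfcoe i
      refine ⟨g, hgcoe, ?_⟩
      intro T hT hTe
      have hbound : ∀ z ∈ T, x + p - 1 < z ∧ z ≤ x + p := by
        intro z hz
        rw [hTe] at hz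
        obtain ⟨j, _, rfl⟩ := Finset.mem_image.1 hz
        rw [hg]
        by_cases hfj : f j ≤ x
        · simp only [if_pos hfj]
          constructor
          · have := (hfmem j).1
            linarith
          · linarith
        · simp only [if_neg hfj]
          push_neg at hfj
          have hjS : f j ∈ S := Finset.mem_image.2 ⟨j, Finset.mem_univ _, rfl⟩
          have := hgap (f j) hjS
          push_neg at this
          have h4 := this hfj
          constructor
          · linarith
          · have := (hfmem j).2
            linarith
      obtain ⟨hm1, hm2⟩ := hbound (T.min' hT) (T.min'_mem hT)
      obtain ⟨hM1, hM2⟩ := hbound (T.max' hT) (T.max'_mem hT)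
      linarith
  obtain ⟨g, hgcoe, hgspan⟩ := claim
  set T : Finset ℝ := Finset.image g Finset.univ with hT
  have hTne : T.Nonempty := ⟨g 0, Finset.mem_image.2 ⟨0, Finset.mem_univ _, rfl⟩⟩
  have hspan := hgspan T hTne rfl
  set ε : ℝ := (1 - (T.max' hTne - T.min' hTne))/2 with hε
  have hε0 : 0 < ε := by rw [hε]; linarith
  set a : ℝ := T.min' hTne - ε with ha
  have hall : ∀ i : ZMod n, c (some i) ∈ unitArc p a := by
    intro i
    have hgi : g i ∈ T := Finset.mem_image.2 ⟨i, Finset.mem_univ _, rfl⟩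
    refine ⟨g i, ⟨?_, ?_⟩, hgcoe i⟩
    · have := T.min'_le (g i) hgi
      rw [ha]; linarith
    · have := T.le_max' (g i) hgi
      rw [ha, hε]; linarith
  have := hc a
  rw [acyclicOn_iff] at this
  obtain ⟨i, hi⟩ := this
  exact hi (hall i)
lemma one_ne_zero_addCircle_two : ((1:ℝ) : AddCircle (2:ℝ)) ≠ 0 := by
  intro h
  rw [AddCircle.coe_eq_zero_iff] at h
  obtain ⟨m, hm⟩ := h
  rw [zsmul_eq_mul] at hm
  rcases le_or_gt m 0 with h1 | h1
  · have : (m:ℝ) ≤ 0 := by exact_mod_cast h1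
    nlinarith
  · have : (1:ℝ) ≤ (m:ℝ) := by exact_mod_cast h1
    nlinarith

lemma zero_ne_neg_one_zmod (n : ℕ) [NeZero n] (hn : 3 ≤ n) : (0 : ZMod n) ≠ -1 := by
  intro h
  have h1 : ((1:ℤ) : ZMod n) = 0 := by
    push_cast
    linear_combination h
  rw [ZMod.intCast_zmod_eq_zero_iff_dvd] at h1
  have := Int.le_of_dvd one_pos h1
  omega

lemma circ_mem (n : ℕ) [NeZero n] (hn : 3 ≤ n) :
    ∃ c : Option (ZMod n) → AddCircle (2:ℝ),
      IsWeakCircularColouring (addSource (dirCycle n)) 2 c := by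
  have h01 : (0 : ZMod n) ≠ -1 := zero_ne_neg_one_zmod n hn
  have hneg : ((1:ℝ) : AddCircle (2:ℝ)) = 0 - ((1:ℝ) : AddCircle (2:ℝ)) := by
    rw [zero_sub, eq_neg_iff_add_eq_zero, ← AddCircle.coe_add]
    show (((1:ℝ)+1 : ℝ) : AddCircle (2:ℝ)) = 0
    norm_num
  refine ⟨fun x => match x with
    | none => 0
    | some i => if i = -1 then ((1:ℝ) : AddCircle (2:ℝ)) else 0, ?_, ?_⟩
  · intro u w hE
    match u, w with
    | none, none => exact hE.elim
    | some _, none => exact hE.elim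
    | none, some j =>
      by_cases hj : j = -1
      · exact Or.inr ⟨1, ⟨by norm_num, by norm_num⟩, by simp [hj], le_refl 1⟩
      · left
        simp [hj]
    | some i, some j =>
      have hj : j = i + 1 := hE
      subst hj
      by_cases hi : i = -1
      · subst hi
        refine Or.inr ⟨1, ⟨by norm_num, by norm_num⟩, ?_, le_refl 1⟩
        have e1 : (-1 : ZMod n) + 1 = 0 := by ring
        simp only [e1, if_neg h01, if_pos rfl]
        exact hneg
      · by_cases hj2 : i + 1 = -1
        · exact Or.inr ⟨1, ⟨by norm_num, by norm_num⟩, by simp [hj2, hi], le_refl 1⟩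
        · left
          simp [hi, hj2]
  · intro t
    rw [acyclicOn_iff]
    by_contra hall
    push_neg at hall
    have h0 : (if (0:ZMod n) = -1 then ((1:ℝ) : AddCircle (2:ℝ)) else 0) = t := hall 0
    have h1 : (if (-1:ZMod n) = -1 then ((1:ℝ) : AddCircle (2:ℝ)) else 0) = t := hall (-1)
    rw [if_neg h01] at h0
    rw [if_pos rfl] at h1
    exact one_ne_zero_addCircle_two (h1.trans h0.symm)
lemma circ_lb (n : ℕ) [NeZero n] (hn : 3 ≤ n) (p : ℝ) (hp1 : 1 ≤ p)
    (c : Option (ZMod n) → AddCircle p)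
    (hw : IsWeakCircularColouring (addSource (dirCycle n)) p c) :
    2 ≤ p := by
  by_contra hp2
  push_neg at hp2
  have hp0 : 0 < p := by linarith
  haveI : Fact (0 < p) := ⟨hp0⟩
  obtain ⟨harc, hfib⟩ := hw
  set d : ZMod n → ℝ := fun i => ((AddCircle.equivIco p 0 (c (some i) - c none)) : ℝ) with hd
  have hdmem : ∀ i, d i ∈ Set.Ico (0:ℝ) p := by
    intro i
    have := (AddCircle.equivIco p 0 (c (some i) - c none)).2
    simpa using this
  have hdcoe : ∀ i, ((d i : ℝ) : AddCircle p) = c (some i) - c none := fun i => coe_rep _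
  have h0mem : (0:ℝ) ∈ Set.Ico (0:ℝ) p := ⟨le_refl 0, hp0⟩
  have hzero : ((0:ℝ) : AddCircle p) = 0 := by norm_num
  -- source dichotomy
  have hdich : ∀ i, d i = 0 ∨ 1 ≤ d i := by
    intro i
    rcases harc none (some i) trivial with heq | ⟨r, hr, hre, hr1⟩
    · left
      refine rep_unique (hdmem i) h0mem ?_
      rw [hdcoe, ← heq, sub_self, hzero]
    · right
      have : r = d i := rep_unique hr (hdmem i) (by rw [hre, hdcoe])
      linarith
  -- the value determines the colour
  have hcol : ∀ i, c (some i) = c none + ((d i : ℝ) : AddCircle p) := by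
    intro i
    rw [hdcoe]
    abel
  -- step
  have hstep : ∀ i : ZMod n, 1 ≤ d i → 1 ≤ d (i+1) ∧ d (i+1) ≤ d i := by
    intro i hdi
    have hE : addSource (dirCycle n) (some i) (some (i+1)) := rfl
    rcases harc (some i) (some (i+1)) hE with heq | ⟨r, hr, hre, hr1⟩
    · have : d (i+1) = d i := by
        refine rep_unique (hdmem (i+1)) (hdmem i) ?_
        rw [hdcoe, hdcoe, heq]
      rw [this]
      exact ⟨hdi, le_refl _⟩
    · -- ↑r = c(some (i+1)) - c (some i) = ↑(d (i+1) - d i)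
      have hre2 : ((r - (d (i+1) - d i) : ℝ) : AddCircle p) = 0 := by
        rw [AddCircle.coe_sub, AddCircle.coe_sub, hdcoe, hdcoe, hre]
        abel
      rw [AddCircle.coe_eq_zero_iff] at hre2
      obtain ⟨m, hm⟩ := hre2
      rw [zsmul_eq_mul] at hm
      obtain ⟨hd1, hd1'⟩ := hdmem i
      obtain ⟨hd2, hd2'⟩ := hdmem (i+1)
      obtain ⟨hr0, hrp⟩ := hr
      -- bounds: m*p = r - d(i+1) + d i ∈ (1-p, 2p)
      have hb1 : (m:ℝ) * p > -p := by nlinarith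
      have hb2 : (m:ℝ) * p < 2 * p := by nlinarith
      have hm0 : 0 ≤ m := by
        by_contra hneg
        push_neg at hneg
        have hm1' : m ≤ -1 := by omega
        have : (m:ℝ) ≤ -1 := by exact_mod_cast hm1'
        nlinarith
      have hm1 : m ≤ 1 := by
        by_contra hbig
        push_neg at hbig
        have : (2:ℝ) ≤ (m:ℝ) := by exact_mod_cast hbig
        nlinarith
      interval_cases m
      · -- m = 0 : d(i+1) = d i + r ≥ 2 > p, contradiction
        exfalso
        simp at hm
        nlinarith
      · -- m = 1 : d(i+1) = d i + r - p
        simp at hm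
        have he : d (i+1) = d i + r - p := by linarith
        constructor
        · rcases hdich (i+1) with h0 | h1
          · exfalso
            rw [h0] at he
            nlinarith
          · exact h1
        · nlinarith
  -- exists starting point
  have hmemfib := hfib (c none)
  rw [acyclicOn_iff] at hmemfib
  obtain ⟨i0, hi0⟩ := hmemfib
  have hd0 : 1 ≤ d i0 := by
    rcases hdich i0 with h0 | h1
    · exfalso
      apply hi0
      show c (some i0) = c none
      rw [hcol i0, h0, hzero, add_zero]
    · exact h1
  -- the chain
  set D : ℕ → ℝ := fun t => d (i0 + (t : ZMod n)) with hD
  have hD0 : D 0 = d i0 := by simp [hD]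
  have hDone : ∀ t, 1 ≤ D t := by
    intro t
    induction t with
    | zero => rw [hD0]; exact hd0
    | succ t ih =>
      have := (hstep (i0 + (t : ZMod n)) ih).1
      have hc : i0 + (t : ZMod n) + 1 = i0 + ((t+1 : ℕ) : ZMod n) := by push_cast; ring
      rwa [hc] at this
  have hDdec : ∀ t, D (t+1) ≤ D t := by
    intro t
    have := (hstep (i0 + (t : ZMod n)) (hDone t)).2
    have hc : i0 + (t : ZMod n) + 1 = i0 + ((t+1 : ℕ) : ZMod n) := by push_cast; ring
    rwa [hc] at this
  have hmono : ∀ t s : ℕ, s ≤ t → D t ≤ D s := by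
    intro t
    induction t with
    | zero => intro s hs; rw [Nat.le_zero.1 hs]
    | succ t ih =>
      intro s hs
      rcases Nat.lt_or_ge s (t+1) with h | h
      · exact (hDdec t).trans (ih s (Nat.lt_succ_iff.1 h))
      · rw [le_antisymm hs h]
  have hDn : D n = D 0 := by
    rw [hD]
    simp [ZMod.natCast_self]
  have hconst : ∀ j : ZMod n, d j = d i0 := by
    intro j
    have hjt : j = i0 + (((j - i0).val : ℕ) : ZMod n) := by
      rw [ZMod.natCast_rightInverse (j - i0)]
      ring
    have h1 : D ((j - i0).val) ≤ D 0 := hmono _ 0 (Nat.zero_le _)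
    have h2 : D n ≤ D ((j - i0).val) := hmono n _ (le_of_lt (ZMod.val_lt _))
    rw [hDn] at h2
    have h3 : D ((j - i0).val) = D 0 := le_antisymm h1 h2
    have h4 : d j = D ((j - i0).val) := by
      rw [hD]
      exact congrArg d hjt
    rw [h4, h3, hD0]
  have hcall : ∀ j : ZMod n, c (some j) = c (some i0) := by
    intro j
    rw [hcol j, hcol i0, hconst j]
  refine not_acyclicOn (A := c ⁻¹' {c (some i0)}) ?_ (hfib (c (some i0)))
  intro j
  show c (some j) ∈ ({c (some i0)} : Set (AddCircle p))
  rw [hcall j]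
  exact rfl
end Helpers

set_option maxHeartbeats 2000000 in
/-- `χ⃗*(C⃗_n^s) = n/(n-1) < 2 = χ⃗_c(C⃗_n^s)` for `n ≥ 3`. -/
theorem stmt15 (n : ℕ) [NeZero n] (hn : 3 ≤ n) :
    starDichromatic (addSource (dirCycle n)) = (n : ℝ) / ((n : ℝ) - 1) ∧
    (n : ℝ) / ((n : ℝ) - 1) < 2 ∧
    circularDichromatic (addSource (dirCycle n)) = 2 := by
  have hn3 : (3:ℝ) ≤ (n:ℝ) := by exact_mod_cast hn
  have hn1 : (0:ℝ) < (n:ℝ) - 1 := by linarith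
  obtain ⟨hp1, c, hc⟩ := star_mem n hn
  refine ⟨?_, ?_, ?_⟩
  · apply le_antisymm
    · apply csInf_le
      · refine ⟨(n:ℝ)/((n:ℝ)-1), ?_⟩
        rintro q ⟨hq1, cq, hcq⟩
        exact star_lb n hn q hq1 cq hcq
      · exact ⟨hp1, c, hc⟩
    · refine le_csInf ⟨(n:ℝ)/((n:ℝ)-1), hp1, c, hc⟩ ?_
      rintro q ⟨hq1, cq, hcq⟩
      exact star_lb n hn q hq1 cq hcq
  · rw [div_lt_iff₀ hn1]
    linarith
  · obtain ⟨c2, hc2⟩ := circ_mem n hn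
    apply le_antisymm
    · apply csInf_le
      · refine ⟨2, ?_⟩
        rintro q ⟨hq1, cq, hcq⟩
        exact circ_lb n hn q hq1 cq hcq
      · exact ⟨by norm_num, c2, hc2⟩
    · refine le_csInf ⟨2, by norm_num, c2, hc2⟩ ?_
      rintro q ⟨hq1, cq, hcq⟩
      exact circ_lb n hn q hq1 cq hcq
end

section
/- For every real ε > 0 there exists a loopless digraph D with χ⃗_c(D) − χ⃗*(D) ≥ 1 − ε; that is, the gap between the circular dichromatic number and the star dichromatic number can be arbitrarily close to 1. -/
open Finset

variable {V : Type*}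

namespace Stmt16Helpers

/-- The digraph: a directed `n`-cycle on vertices `0, …, n-1` together with a
dominating source `n`. -/
def Egraph (n : ℕ) : Fin (n+1) → Fin (n+1) → Prop :=
  fun u w => (u.val = n ∧ w.val < n) ∨ (u.val < n ∧ w.val < n ∧ w.val = (u.val + 1) % n)

variable {n : ℕ}

lemma Egraph_irrefl (hn : 2 ≤ n) (v : Fin (n+1)) : ¬ Egraph n v v := by
  rintro (⟨h1, h2⟩ | ⟨h1, h2, h3⟩)
  · omega
  · rcases Nat.lt_or_ge (v.val + 1) n with h | h
    · rw [Nat.mod_eq_of_lt h] at h3; omega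
    · have hvn : v.val + 1 = n := by omega
      rw [hvn, Nat.mod_self] at h3; omega

lemma Egraph_target {u w : Fin (n+1)} (h : Egraph n u w) : w.val < n := by
  rcases h with ⟨_, h⟩ | ⟨_, h, _⟩ <;> exact h

lemma chain_lt : ∀ (L : List (Fin (n+1))) (v : Fin (n+1)),
    List.Chain (Egraph n) v L → ∀ x ∈ L, x.val < n := by
  intro L
  induction L with
  | nil => intro v _ x hx; simp at hx
  | cons b t ih =>
    intro v h x hx
    simp only [List.Chain, List.chain_cons] at h
    rcases List.mem_cons.mp hx with rfl | hx
    · exact Egraph_target h.1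
    · exact ih b h.2 x hx

lemma dicycle_lt {v : Fin (n+1)} {l : List (Fin (n+1))}
    (h : IsDicycle (Egraph n) v l) : ∀ x ∈ v :: l, x.val < n := by
  intro x hx
  rcases List.mem_cons.mp hx with rfl | hx
  · exact chain_lt _ _ h.2 x (by simp)
  · exact chain_lt _ _ h.2 x (by simp [hx])

lemma chain_succ : ∀ (L : List (Fin (n+1))) (v : Fin (n+1)), v.val < n →
    List.Chain (Egraph n) v L →
    List.Chain (fun a b : Fin (n+1) => (b.val : ZMod n) = (a.val : ZMod n) + 1) v L := by
  intro L
  induction L with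
  | nil => intro v _ _; exact List.Chain.nil
  | cons b t ih =>
    intro v hv h
    simp only [List.Chain, List.chain_cons] at h ⊢
    have hb : b.val < n := Egraph_target h.1
    refine ⟨?_, ih b hb h.2⟩
    rcases h.1 with ⟨h1, _⟩ | ⟨_, _, h3⟩
    · omega
    · rw [h3, ZMod.natCast_mod]
      push_cast
      ring

lemma chain_succ_getLast : ∀ (L : List (Fin (n+1))) (v : Fin (n+1)),
    List.Chain (fun a b : Fin (n+1) => (b.val : ZMod n) = (a.val : ZMod n) + 1) v L →
    ((((v :: L).getLast (List.cons_ne_nil _ _)).val : ZMod n)) = (v.val : ZMod n) + L.length := by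
  intro L
  induction L with
  | nil => intro v _; simp
  | cons b t ih =>
    intro v h
    simp only [List.Chain, List.chain_cons] at h
    have hlast : (v :: b :: t).getLast (List.cons_ne_nil _ _)
        = (b :: t).getLast (List.cons_ne_nil _ _) := List.getLast_cons _
    rw [hlast, ih b h.2, h.1]
    simp only [List.length_cons]
    push_cast
    ring

lemma chain_succ_mem : ∀ (L : List (Fin (n+1))) (v : Fin (n+1)),
    List.Chain (fun a b : Fin (n+1) => (b.val : ZMod n) = (a.val : ZMod n) + 1) v L →
    ∀ k : ℕ, k ≤ L.length → ∃ x ∈ v :: L, (x.val : ZMod n) = (v.val : ZMod n) + k := by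
  intro L
  induction L with
  | nil =>
    intro v _ k hk
    simp only [List.length_nil, Nat.le_zero] at hk
    subst hk
    exact ⟨v, by simp, by simp⟩
  | cons b t ih =>
    intro v h k hk
    simp only [List.Chain, List.chain_cons] at h
    cases k with
    | zero => exact ⟨v, by simp, by simp⟩
    | succ k' =>
      obtain ⟨x, hx, hgx⟩ := ih b h.2 k' (by simpa using hk)
      refine ⟨x, ?_, ?_⟩
      · simp only [List.mem_cons] at hx ⊢; tauto
      · rw [hgx, h.1]; push_cast; ring

/-- Any dicycle of `Egraph n` passes through every cycle vertex. -/
lemma dicycle_covers (hn : 2 ≤ n) {v : Fin (n+1)} {l : List (Fin (n+1))}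
    (h : IsDicycle (Egraph n) v l) {i : ℕ} (hi : i < n) : ∃ x ∈ v :: l, x.val = i := by
  haveI : NeZero n := ⟨by omega⟩
  have hlt := dicycle_lt h
  have hv : v.val < n := hlt v (by simp)
  have hchain := chain_succ (l ++ [v]) v hv h.2
  -- the closing arc forces `n ∣ l.length + 1`
  have hgl : ((v :: (l ++ [v])).getLast (List.cons_ne_nil _ _)) = v :=
    List.getLast_append_of_ne_nil (l := v :: l) _ (List.cons_ne_nil _ _)
  have hlast := chain_succ_getLast (l ++ [v]) v hchain
  rw [hgl] at hlast
  have hdvd : n ∣ l.length + 1 := by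
    have h0 : (((l ++ [v]).length : ℕ) : ZMod n) = 0 := by
      rwa [left_eq_add] at hlast
    rw [← ZMod.natCast_eq_zero_iff]
    simpa using h0
  -- nodup forces `l.length + 1 ≤ n`
  have hmapnd : ((v :: l).map (fun x : Fin (n+1) => (x.val : ZMod n))).Nodup := by
    refine List.Nodup.map_on ?_ h.1
    intro a ha b hb hab
    have ha' := hlt a ha
    have hb' := hlt b hb
    have hval : a.val = b.val := by
      have hv2 := congrArg ZMod.val hab
      rwa [ZMod.val_cast_of_lt ha', ZMod.val_cast_of_lt hb'] at hv2
    exact Fin.ext hval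
  have hcard : l.length + 1 ≤ n := by
    have hle := hmapnd.length_le_card
    simpa [ZMod.card n] using hle
  have hlen : l.length + 1 = n :=
    le_antisymm hcard (Nat.le_of_dvd (by omega) hdvd)
  -- now find the vertex with value `i`
  obtain ⟨x, hx, hgx⟩ := chain_succ_mem (l ++ [v]) v hchain ((i + n - v.val) % n)
    (by
      have hmod : (i + n - v.val) % n < n := Nat.mod_lt _ (by omega)
      simp only [List.length_append, List.length_cons, List.length_nil]
      omega)
  have hx' : x ∈ v :: l := by
    simp only [List.mem_cons, List.mem_append, List.mem_singleton] at hx ⊢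
    tauto
  refine ⟨x, hx', ?_⟩
  have hxlt : x.val < n := hlt x hx'
  have hzx : ((x.val : ZMod n)) = (i : ZMod n) := by
    rw [hgx, ZMod.natCast_mod, Nat.cast_sub (by omega : v.val ≤ i + n), Nat.cast_add,
      ZMod.natCast_self]
    ring
  have hfin := congrArg ZMod.val hzx
  rwa [ZMod.val_cast_of_lt hxlt, ZMod.val_cast_of_lt hi] at hfin

/-- The `i`-th cycle vertex (indices taken mod `n`). -/
def fvert (n i : ℕ) : Fin (n+1) := ⟨i % n % (n+1), Nat.mod_lt _ (Nat.succ_pos n)⟩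

lemma fvert_val (hn : 0 < n) (i : ℕ) : (fvert n i).val = i % n := by
  simp only [fvert]
  exact Nat.mod_eq_of_lt (lt_trans (Nat.mod_lt _ hn) n.lt_succ_self)

lemma fvert_arc (hn : 2 ≤ n) (i : ℕ) : Egraph n (fvert n i) (fvert n (i+1)) := by
  have h0 : 0 < n := by omega
  refine Or.inr ?_
  rw [fvert_val h0, fvert_val h0]
  refine ⟨Nat.mod_lt _ h0, Nat.mod_lt _ h0, ?_⟩
  conv_lhs => rw [Nat.add_mod i 1 n, Nat.mod_eq_of_lt (show 1 < n by omega)]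

/-- The full directed cycle as a dicycle of `Egraph`. -/
lemma fullcycle (m : ℕ) :
    IsDicycle (Egraph (m+2)) (fvert (m+2) 0)
      ((List.range (m+1)).map (fun k => fvert (m+2) (k+1))) := by
  have hn : 2 ≤ m + 2 := by omega
  have h0 : 0 < m + 2 := by omega
  have hr1 : List.range (m+3) = List.range (m+2) ++ [m+2] := List.range_succ (n := m+2)
  have hr2 : List.range (m+2) = 0 :: (List.range (m+1)).map Nat.succ :=
    List.range_succ_eq_map (n := m+1)
  have hf : fvert (m+2) (m+2) = fvert (m+2) 0 := by
    apply Fin.ext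
    rw [fvert_val h0, fvert_val h0, Nat.mod_self, Nat.zero_mod]
  have hlist : (List.range (m+3)).map (fvert (m+2))
      = fvert (m+2) 0 :: (((List.range (m+1)).map (fun k => fvert (m+2) (k+1))) ++
          [fvert (m+2) 0]) := by
    rw [hr1, hr2]
    simp [List.map_map, Function.comp, hf, Nat.succ_eq_add_one]
  constructor
  · -- Nodup
    have hnd : ((List.range (m+2)).map (fvert (m+2))).Nodup := by
      refine List.Nodup.map_on ?_ List.nodup_range
      intro a ha b hb hab
      rw [List.mem_range] at ha hb
      have := congrArg Fin.val hab
      rwa [fvert_val h0, fvert_val h0, Nat.mod_eq_of_lt ha, Nat.mod_eq_of_lt hb] at this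
    rw [hr2] at hnd
    simpa [List.map_map, Function.comp, Function.comp_def, Nat.succ_eq_add_one] using hnd
  · -- Chain
    have hch0 : List.Chain' (fun i j : ℕ => Egraph (m+2) (fvert (m+2) i) (fvert (m+2) j))
        (List.range (m+3)) :=
      (List.isChain_range_succ _ (m+2)).mpr (fun k _ => fvert_arc hn k)
    have hch : List.Chain' (Egraph (m+2)) ((List.range (m+3)).map (fvert (m+2))) := by
      simp only [List.Chain', List.isChain_map]
      exact hch0
    rw [hlist] at hch
    exact hch

lemma fullcycle_mem (m : ℕ) {x : Fin (m+3)}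
    (hx : x ∈ fvert (m+2) 0 :: (List.range (m+1)).map (fun k => fvert (m+2) (k+1))) :
    ∃ i < m + 2, x = fvert (m+2) i := by
  rcases List.mem_cons.mp hx with rfl | hx
  · exact ⟨0, by omega, rfl⟩
  · obtain ⟨k, hk, rfl⟩ := List.mem_map.mp hx
    rw [List.mem_range] at hk
    exact ⟨k + 1, by omega, rfl⟩

lemma acyclicOn_subsingleton {α : Type*} {E : α → α → Prop} (hE : ∀ v, ¬ E v v) {A : Set α}
    (hA : ∀ x ∈ A, ∀ y ∈ A, x = y) : AcyclicOn E A := by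
  rintro v l ⟨hnd, hch⟩ hall
  cases l with
  | nil =>
    simp only [List.nil_append, List.Chain, List.chain_cons] at hch
    exact hE v hch.1
  | cons b t =>
    have hv : v ∈ A := hall v (by simp)
    have hb : b ∈ A := hall b (by simp)
    have hvb : v = b := hA v hv b hb
    rw [List.nodup_cons] at hnd
    exact hnd.1 (hvb ▸ List.mem_cons_self (a := b) (l := t))

lemma coe_eq_coe_iff {p : ℝ} {a b : ℝ} :
    (a : AddCircle p) = (b : AddCircle p) ↔ ∃ m : ℤ, b = a + m * p := by
  rw [eq_comm, ← sub_eq_zero, ← AddCircle.coe_sub, AddCircle.coe_eq_zero_iff]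
  constructor
  · rintro ⟨m, hm⟩
    rw [zsmul_eq_mul] at hm
    exact ⟨m, by linarith⟩
  · rintro ⟨m, hm⟩
    refine ⟨m, ?_⟩
    rw [zsmul_eq_mul, hm]
    ring

end Stmt16Helpers

namespace Stmt16Helpers

lemma star_le (hn : 2 ≤ n) : starDichromatic (Egraph n) ≤ 1 + 2 / n := by
  have hnR : (2 : ℝ) ≤ (n : ℝ) := by exact_mod_cast hn
  have hnpos : (0 : ℝ) < n := by linarith
  set p : ℝ := 1 + 2 / n with hp_def
  have hppos : 0 < p := by positivity
  have hn0 : (n : ℝ) ≠ 0 := ne_of_gt hnpos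
  have h2npos : 0 < 2 / (n : ℝ) := by positivity
  have h2n1 : 2 / (n : ℝ) ≤ 1 := by
    rw [div_le_one hnpos]; linarith
  have h1p : 1 ≤ p := by rw [hp_def]; linarith
  apply csInf_le ⟨1, fun q hq => hq.1⟩
  refine ⟨h1p, fun x => ((x.val * (p / n) : ℝ) : AddCircle p), ?_⟩
  intro a v l hd hall
  set s : ℝ := p / n with hs_def
  have hs0 : 0 < s := by positivity
  have hple2 : p ≤ 2 := by rw [hp_def]; linarith
  have hsp : s ≤ p - 1 := by
    rw [hs_def, div_le_iff₀ hnpos]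
    have hpn : (p - 1) * n = 2 := by rw [hp_def]; field_simp; ring
    rw [hpn]
    exact hple2
  have hns : (n : ℝ) * s = p := by
    rw [hs_def]; field_simp
  set j : ℤ := ⌈(a+1)/s⌉ with hj_def
  have hj1 : a + 1 ≤ j * s := by
    have := Int.le_ceil ((a+1)/s)
    calc a + 1 = ((a+1)/s) * s := by field_simp
    _ ≤ j * s := by nlinarith
  have hj2 : (j : ℝ) * s < a + 1 + s := by
    have := Int.ceil_lt_add_one ((a+1)/s)
    have h2 : (j : ℝ) * s < ((a+1)/s + 1) * s := by nlinarith
    calc (j : ℝ) * s < ((a+1)/s + 1) * s := h2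
    _ = a + 1 + s := by field_simp
  have hjp : (j : ℝ) * s < a + p := by linarith
  set i : ℕ := (j % (n : ℤ)).toNat with hi_def
  have hn0 : (n : ℤ) ≠ 0 := by exact_mod_cast (by omega : n ≠ 0)
  have hmod1 : 0 ≤ j % (n : ℤ) := Int.emod_nonneg j hn0
  have hmod2 : j % (n : ℤ) < n := Int.emod_lt_of_pos j (by exact_mod_cast (by omega : 0 < n))
  have hiZ : (i : ℤ) = j % (n : ℤ) := Int.toNat_of_nonneg hmod1
  have hin : i < n := by omega
  obtain ⟨x, hx, hxval⟩ := dicycle_covers hn hd hin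
  have hmem := hall x hx
  obtain ⟨y, hy, hyeq⟩ := hmem
  rw [coe_eq_coe_iff] at hyeq
  obtain ⟨m, hm⟩ := hyeq
  -- x.val * s = i * s = j * s - (j / n) * p
  have hijs : (i : ℝ) * s = (j : ℝ) * s - ((j / (n : ℤ) : ℤ) : ℝ) * p := by
    have hemod : (i : ℤ) = j - (n : ℤ) * (j / (n : ℤ)) := by
      rw [hiZ]; exact Int.emod_def j n
    have : (i : ℝ) = (j : ℝ) - (n : ℝ) * ((j / (n : ℤ) : ℤ) : ℝ) := by
      exact_mod_cast congrArg (fun z : ℤ => (z : ℝ)) hemod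
    linear_combination s * this - ((j / (n : ℤ) : ℤ) : ℝ) * hns
  rw [hxval] at hm
  rw [hijs] at hm
  -- hm : (j:ℝ)*s - (j/n)*p = y + m*p, y ∈ Ioo a (a+1)
  set M : ℤ := j / (n : ℤ) + m with hM_def
  have hyM : y = (j : ℝ) * s - (M : ℝ) * p := by
    rw [hM_def]
    push_cast
    linarith [hm]
  obtain ⟨hy1, hy2⟩ := hy
  rcases Int.lt_or_le M 1 with hM | hM
  · -- M ≤ 0 : y ≥ j*s ≥ a+1, contradiction with y < a+1
    have hMR : (M : ℝ) ≤ 0 := by exact_mod_cast Int.lt_add_one_iff.mp hM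
    nlinarith
  · -- M ≥ 1 : y ≤ j*s - p < a, contradiction with a < y
    have hMR : (1 : ℝ) ≤ (M : ℝ) := by exact_mod_cast hM
    nlinarith

lemma no_small_colouring (m : ℕ) {q : ℝ} (hq1 : 1 ≤ q) (hq : q < 2)
    (c : Fin (m+2+1) → AddCircle q)
    (hc1 : ∀ u w, Egraph (m+2) u w → c u = c w ∨
      ∃ r : ℝ, r ∈ Set.Ico (0 : ℝ) q ∧ (r : AddCircle q) = c w - c u ∧ 1 ≤ r)
    (hc2 : ∀ t : AddCircle q, AcyclicOn (Egraph (m+2)) (c ⁻¹' {t})) : False := by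
  have hqpos : (0 : ℝ) < q := by linarith
  set S : Fin (m+2+1) := ⟨m+2, Nat.lt_succ_self (m+2)⟩ with hS_def
  have hsrc : ∀ i : ℕ, Egraph (m+2) S (fvert (m+2) i) := by
    intro i
    left
    exact ⟨rfl, by rw [fvert_val (by omega)]; exact Nat.mod_lt _ (by omega)⟩
  -- choose representatives
  have hex : ∀ jj : Fin (m+2), ∃ x : ℝ, (0 ≤ x ∧ x < q) ∧ (x = 0 ∨ 1 ≤ x) ∧
      ((x : AddCircle q) = c (fvert (m+2) jj.val) - c S) := by
    intro jj
    rcases hc1 S (fvert (m+2) jj.val) (hsrc jj.val) with he | ⟨r, hr1, hr2, hr3⟩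
    · refine ⟨0, ⟨le_refl 0, hqpos⟩, Or.inl rfl, ?_⟩
      rw [← he, sub_self]
      exact (QuotientAddGroup.mk_zero _)
    · exact ⟨r, ⟨hr1.1, hr1.2⟩, Or.inr hr3, hr2⟩
  choose ξ0 hξ0 using hex
  set ξ : ℕ → ℝ := fun i => ξ0 ⟨i % (m+2), Nat.mod_lt _ (by omega)⟩ with hξ_def
  have hfv : ∀ i : ℕ, fvert (m+2) (i % (m+2)) = fvert (m+2) i := by
    intro i
    apply Fin.ext
    rw [fvert_val (by omega), fvert_val (by omega), Nat.mod_mod_of_dvd i (dvd_refl (m+2))]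
  have hξc : ∀ i : ℕ, ((ξ i : ℝ) : AddCircle q) = c (fvert (m+2) i) - c S := by
    intro i
    have h1 := (hξ0 ⟨i % (m+2), Nat.mod_lt _ (by omega)⟩).2.2
    rw [← hfv i]
    exact h1
  have hξIco : ∀ i : ℕ, 0 ≤ ξ i ∧ ξ i < q := fun i => (hξ0 _).1
  have hξ01 : ∀ i : ℕ, ξ i = 0 ∨ 1 ≤ ξ i := fun i => (hξ0 _).2.1
  have hper : ∀ i : ℕ, ξ (i + (m+2)) = ξ i := by
    intro i
    have heq : (⟨(i + (m+2)) % (m+2), Nat.mod_lt _ (by omega)⟩ : Fin (m+2))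
        = ⟨i % (m+2), Nat.mod_lt _ (by omega)⟩ := Fin.ext (by simp [Nat.add_mod_right])
    exact congrArg ξ0 heq
  -- step analysis
  have hstep : ∀ i : ℕ, ξ (i+1) = ξ i ∨ (ξ i = 0 ∧ 1 ≤ ξ (i+1)) ∨
      (1 ≤ ξ i ∧ 1 ≤ ξ (i+1) ∧ ξ (i+1) ≤ ξ i) := by
    intro i
    have harc : Egraph (m+2) (fvert (m+2) i) (fvert (m+2) (i+1)) := fvert_arc (by omega) i
    have h0i := hξIco i
    have h0i1 := hξIco (i+1)
    rcases hc1 (fvert (m+2) i) (fvert (m+2) (i+1)) harc with he | ⟨d, hd1, hd2, hd3⟩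
    · left
      have hcoe : ((ξ (i+1) : ℝ) : AddCircle q) = ((ξ i : ℝ) : AddCircle q) := by
        rw [hξc, hξc, he]
      rw [coe_eq_coe_iff] at hcoe
      obtain ⟨mm, hmm⟩ := hcoe
      have hmm0 : mm = 0 := by
        rcases lt_trichotomy mm 0 with h | h | h
        · have hmmR : (mm : ℝ) ≤ -1 := by exact_mod_cast (by omega : mm ≤ -1)
          nlinarith
        · exact h
        · have hmmR : (1 : ℝ) ≤ (mm : ℝ) := by exact_mod_cast h
          nlinarith
      rw [hmm0] at hmm
      push_cast at hmm
      linarith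
    · have hcoe : ((ξ i + d : ℝ) : AddCircle q) = ((ξ (i+1) : ℝ) : AddCircle q) := by
        rw [AddCircle.coe_add, hξc, hξc, hd2]
        abel
      rw [coe_eq_coe_iff] at hcoe
      obtain ⟨mm, hmm⟩ := hcoe
      have hd0 : 0 ≤ d := hd1.1
      have hdq : d < q := hd1.2
      have hmmR : mm = 0 ∨ mm = -1 := by
        have h1 : (mm : ℝ) * q < q := by nlinarith
        have h2 : -2 * q < (mm : ℝ) * q := by nlinarith
        have h3 : (mm : ℝ) < 1 := by
          by_contra hcon
          push_neg at hcon
          nlinarith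
        have h4 : (-2 : ℝ) < (mm : ℝ) := by
          by_contra hcon
          push_neg at hcon
          nlinarith
        have h3' : mm < 1 := by exact_mod_cast h3
        have h4' : (-2 : ℤ) < mm := by exact_mod_cast h4
        omega
      rcases hmmR with rfl | rfl
      · -- no wrap: launch step
        push_cast at hmm
        right; left
        have hi0 : ξ i = 0 := by
          rcases hξ01 i with h | h
          · exact h
          · exfalso
            nlinarith
        exact ⟨hi0, by rw [hmm, hi0]; linarith⟩
      · -- wrap: decreasing step
        push_cast at hmm
        right; right
        have hi1 : 1 ≤ ξ i := by
          rcases hξ01 i with h | h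
          · exfalso
            rw [h] at hmm
            nlinarith
          · exact h
        have hposx : 0 < ξ (i+1) := by nlinarith
        have hi11 : 1 ≤ ξ (i+1) := by
          rcases hξ01 (i+1) with h | h
          · exfalso; rw [h] at hposx; exact lt_irrefl 0 hposx
          · exact h
        exact ⟨hi1, hi11, by nlinarith⟩
  -- all colours equal is impossible (would give a monochromatic dicycle)
  have hnotconst : ¬ ∀ i < m+2, c (fvert (m+2) i) = c (fvert (m+2) 0) := by
    intro hall
    apply hc2 (c (fvert (m+2) 0)) _ _ (fullcycle m)
    intro x hx
    obtain ⟨i, hi, rfl⟩ := fullcycle_mem m hx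
    rw [Set.mem_preimage, Set.mem_singleton_iff]
    exact hall i hi
  by_cases hL : ∃ i, ξ i = 0 ∧ 1 ≤ ξ (i+1)
  · obtain ⟨i0, hi00, hi01⟩ := hL
    have hprop : ∀ k : ℕ, 1 ≤ ξ (i0 + 1 + k) := by
      intro k
      induction k with
      | zero => simpa using hi01
      | succ k' ih =>
        have hs := hstep (i0 + 1 + k')
        rw [show i0 + 1 + (k' + 1) = i0 + 1 + k' + 1 by ring]
        rcases hs with h | ⟨h1, _⟩ | ⟨_, h2, _⟩
        · rw [h]; exact ih
        · rw [h1] at ih; linarith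
        · exact h2
    have hcontr := hprop (m+1)
    rw [show i0 + 1 + (m + 1) = i0 + (m+2) by ring, hper i0, hi00] at hcontr
    linarith
  · push_neg at hL
    have hdec : ∀ i : ℕ, ξ (i+1) ≤ ξ i := by
      intro i
      rcases hstep i with h | ⟨h1, h2⟩ | ⟨_, _, h3⟩
      · exact le_of_eq h
      · exact absurd h2 (not_le.mpr (hL i h1))
      · exact h3
    have hanti : Antitone ξ := antitone_nat_of_succ_le hdec
    have hconst : ∀ i ≤ m+2, ξ i = ξ 0 := by
      intro i hi
      have h1 : ξ i ≤ ξ 0 := hanti (Nat.zero_le i)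
      have h2 : ξ (m+2) ≤ ξ i := hanti hi
      have h3 : ξ (m+2) = ξ 0 := by
        have := hper 0
        simpa using this
      linarith
    apply hnotconst
    intro i hi
    have hcoe : ((ξ i : ℝ) : AddCircle q) = ((ξ 0 : ℝ) : AddCircle q) := by
      rw [hconst i (by omega)]
    rw [hξc, hξc] at hcoe
    exact sub_left_inj.mp hcoe

lemma circ_ge (hn : 2 ≤ n) : 2 ≤ circularDichromatic (Egraph n) := by
  have hnR : (2 : ℝ) ≤ (n : ℝ) := by exact_mod_cast hn
  have h0 : 0 < n := by omega
  have hne : ((n : ℝ) + 1) ∈ {p : ℝ | 1 ≤ p ∧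
      ∃ c : Fin (n+1) → AddCircle p, IsWeakCircularColouring (Egraph n) p c} := by
    have hPpos : (0 : ℝ) < (n : ℝ) + 1 := by positivity
    refine ⟨by linarith, fun x => ((x.val : ℝ) : AddCircle ((n : ℝ) + 1)), ?_, ?_⟩
    · intro u w huw
      right
      have hval : u.val ≠ w.val := by
        intro he
        rcases huw with ⟨h1, h2⟩ | ⟨h1, h2, h3⟩
        · omega
        · rw [← he] at h3
          rcases Nat.lt_or_ge (u.val + 1) n with h | h
          · rw [Nat.mod_eq_of_lt h] at h3; omega
          · have hun : u.val + 1 = n := by omega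
            rw [hun, Nat.mod_self] at h3; omega
      have huR : (u.val : ℝ) ≤ n := by exact_mod_cast (by omega : u.val ≤ n)
      have hwR : (w.val : ℝ) ≤ n := by exact_mod_cast (by omega : w.val ≤ n)
      have hu0 : (0 : ℝ) ≤ u.val := by positivity
      have hw0 : (0 : ℝ) ≤ w.val := by positivity
      rcases Nat.lt_or_ge u.val w.val with h | h
      · have hltR : (u.val : ℝ) + 1 ≤ w.val := by exact_mod_cast h
        refine ⟨(w.val : ℝ) - u.val, ⟨by linarith, by linarith⟩, ?_, by linarith⟩
        rw [AddCircle.coe_sub ((n : ℝ) + 1) (w.val : ℝ) (u.val : ℝ)]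
      · have hlt : w.val < u.val := by omega
        have hltR : (w.val : ℝ) + 1 ≤ u.val := by exact_mod_cast hlt
        refine ⟨(w.val : ℝ) - u.val + ((n : ℝ) + 1), ⟨by linarith, by linarith⟩, ?_, by linarith⟩
        rw [AddCircle.coe_add_period ((n : ℝ) + 1) ((w.val : ℝ) - (u.val : ℝ)),
          AddCircle.coe_sub ((n : ℝ) + 1) (w.val : ℝ) (u.val : ℝ)]
    · intro t
      apply acyclicOn_subsingleton (Egraph_irrefl hn)
      intro x hx y hy
      have hxy : ((x.val : ℝ) : AddCircle ((n : ℝ) + 1)) = ((y.val : ℝ) : AddCircle ((n : ℝ) + 1)) := by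
        rw [Set.mem_preimage, Set.mem_singleton_iff] at hx hy
        rw [hx, hy]
      rw [coe_eq_coe_iff] at hxy
      obtain ⟨m, hm⟩ := hxy
      have hxR : (x.val : ℝ) ≤ n := by exact_mod_cast (by omega : x.val ≤ n)
      have hyR : (y.val : ℝ) ≤ n := by exact_mod_cast (by omega : y.val ≤ n)
      have hx0 : (0 : ℝ) ≤ x.val := by positivity
      have hy0 : (0 : ℝ) ≤ y.val := by positivity
      have hm0 : m = 0 := by
        rcases lt_trichotomy m 0 with h | h | h
        · have hmR : (m : ℝ) ≤ -1 := by exact_mod_cast (by omega : m ≤ -1)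
          nlinarith
        · exact h
        · have hmR : (1 : ℝ) ≤ (m : ℝ) := by exact_mod_cast h
          nlinarith
      rw [hm0] at hm
      push_cast at hm
      have hvals : x.val = y.val := by exact_mod_cast (by linarith : (x.val : ℝ) = (y.val : ℝ))
      exact Fin.ext hvals
  apply le_csInf ⟨_, hne⟩
  rintro q ⟨hq1, c, hc1, hc2⟩
  by_contra hq2
  push_neg at hq2
  obtain ⟨m, rfl⟩ : ∃ m, n = m + 2 := ⟨n - 2, by omega⟩
  exact no_small_colouring m hq1 hq2 c hc1 hc2
end Stmt16Helpers

/-- the gap `χ⃗_c(D) - χ⃗*(D)` can be arbitrarily close to 1. -/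
theorem stmt16 (ε : ℝ) (hε : 0 < ε) :
    ∃ (n : ℕ) (E : Fin n → Fin n → Prop), 0 < n ∧ (∀ v, ¬ E v v) ∧
      1 - ε ≤ circularDichromatic E - starDichromatic E := by
  set n : ℕ := max 2 ⌈2/ε⌉₊ with hn_def
  have hn2 : 2 ≤ n := le_max_left _ _
  have hnR : (2:ℝ) ≤ (n:ℝ) := by exact_mod_cast hn2
  have hnpos : (0:ℝ) < (n:ℝ) := by linarith
  have hceil : (2/ε : ℝ) ≤ (n:ℝ) := by
    calc (2/ε : ℝ) ≤ (⌈2/ε⌉₊ : ℝ) := Nat.le_ceil _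
    _ ≤ (n:ℝ) := by exact_mod_cast le_max_right 2 _
  have h2n : 2 / (n:ℝ) ≤ ε := by
    rw [div_le_iff₀ hnpos]
    rw [div_le_iff₀ hε] at hceil
    linarith
  refine ⟨n+1, Stmt16Helpers.Egraph n, Nat.succ_pos n, Stmt16Helpers.Egraph_irrefl hn2, ?_⟩
  have h1 := Stmt16Helpers.star_le hn2
  have h2 := Stmt16Helpers.circ_ge hn2
  linarith
end

section
/- For every undirected simple graph G, χ⃗*(G) ≤ va*(G), where χ⃗*(G) is the maximum of the star dichromatic number over all orientations of G and va*(G) is the circular vertex arboricity of G. -/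
open Finset

variable {V : Type*}

section Aux

lemma forestOn_mono {G : SimpleGraph V} {A B : Set V} (hAB : A ⊆ B) (hB : ForestOn G B) :
    ForestOn G A := fun v l hc hall => hB v l hc fun x hx => hAB (hall x hx)

lemma acyclicOn_of_forestOn {G : SimpleGraph V} {E : V → V → Prop} (hE : IsOrientation G E)
    {A : Set V} (hA : ForestOn G A) : AcyclicOn E A := by
  rintro v l ⟨hnd, hch⟩ hall
  match l with
  | [] =>
    rw [List.nil_append] at hch; unfold List.Chain at hch; rw [List.chain_cons] at hch
    exact G.irrefl ((hE v v).1.mp (Or.inl hch.1))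
  | [w] =>
    rw [List.cons_append, List.nil_append] at hch; unfold List.Chain at hch; rw [List.chain_cons, List.chain_cons] at hch
    exact (hE v w).2 ⟨hch.1, hch.2.1⟩
  | w :: u :: l'' =>
    refine hA v (w :: u :: l'') ⟨by simp, hnd, ?_⟩ hall
    exact List.Chain.imp (fun a b h => (hE a b).1.mp (Or.inl h)) hch

lemma tree_to_acyclic {G : SimpleGraph V} {E : V → V → Prop} (hE : IsOrientation G E)
    {k d : ℕ} (hd : 1 ≤ d) (hdk : d ≤ k) {c : V → ZMod k} (hc : IsTreeColouring G k d c) :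
    IsAcyclicColouring E ((k : ℝ) / d)
      (fun v => ((((c v).val : ℝ) / d : ℝ) : AddCircle ((k : ℝ) / d))) := by
  haveI : NeZero k := ⟨by omega⟩
  have hd0 : (0 : ℝ) < d := by exact_mod_cast hd
  intro a
  set i0 : ℤ := ⌊(d : ℝ) * a⌋ + 1 with hi0
  have hsub : (fun v => ((((c v).val : ℝ) / d : ℝ) : AddCircle ((k : ℝ) / d))) ⁻¹'
      unitArc ((k : ℝ) / d) a ⊆ c ⁻¹' cycInterval k ((i0 : ℤ) : ZMod k) d := by
    intro v hv
    obtain ⟨x, hx, hxe⟩ := hv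
    dsimp only at hxe
    set q : ℝ := (((c v).val : ℕ) : ℝ) with hq
    have h0 : ((x - q / d : ℝ) : AddCircle ((k : ℝ) / d)) = 0 := by
      rw [AddCircle.coe_sub, hxe, hq, sub_self]
    obtain ⟨m, hm⟩ := (AddCircle.coe_eq_zero_iff _).mp h0
    have hdne : (d : ℝ) ≠ 0 := ne_of_gt hd0
    have hm' : (d : ℝ) * x = q + m * k := by
      rw [zsmul_eq_mul] at hm
      field_simp at hm
      linarith
    set n : ℤ := ((c v).val : ℤ) + m * k with hn
    have hnr : (n : ℝ) = (d : ℝ) * x := by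
      have hqn : ((n : ℤ) : ℝ) = q + (m : ℝ) * (k : ℝ) := by
        rw [hn]; push_cast; rw [hq]
      rw [hqn, hm']
    have hlo : (d : ℝ) * a < (n : ℝ) := by
      rw [hnr]; exact mul_lt_mul_of_pos_left hx.1 hd0
    have hhi : (n : ℝ) < (d : ℝ) * a + d := by
      rw [hnr]
      have := mul_lt_mul_of_pos_left hx.2 hd0
      linarith [this]
    have hni : i0 ≤ n := by
      rw [hi0]
      exact Int.floor_lt.mpr hlo
    have hnd : n < i0 + d := by
      have h1 : (n : ℝ) < ((i0 + d : ℤ) : ℝ) := by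
        push_cast [hi0]
        have := Int.lt_floor_add_one ((d : ℝ) * a)
        linarith
      exact_mod_cast h1
    set t : ℕ := (n - i0).toNat with htdef
    have htn : (t : ℤ) = n - i0 := Int.toNat_of_nonneg (by omega)
    have htd : t < d := by omega
    refine ⟨t, htd, ?_⟩
    have h1 : ((n : ℤ) : ZMod k) = c v := by
      have hkz : ((k : ℕ) : ZMod k) = 0 := ZMod.natCast_self k
      have : ((n : ℤ) : ZMod k) = (((c v).val : ℕ) : ZMod k) + (m : ZMod k) * ((k : ℕ) : ZMod k) := by
        rw [hn]; push_cast; ring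
      rw [this, hkz, mul_zero, add_zero, ZMod.natCast_rightInverse (c v)]
    have h2 : (n : ℤ) = i0 + (t : ℤ) := by omega
    rw [← h1, h2]
    push_cast
    ring
  exact acyclicOn_of_forestOn hE (forestOn_mono hsub (hc _))

lemma starDichromatic_le {G : SimpleGraph V} {E : V → V → Prop} (hE : IsOrientation G E)
    {k d : ℕ} (hd : 1 ≤ d) (hdk : d ≤ k) {c : V → ZMod k} (hc : IsTreeColouring G k d c) :
    starDichromatic E ≤ (k : ℝ) / d := by
  have hd0 : (0 : ℝ) < d := by exact_mod_cast hd
  apply csInf_le ⟨1, fun p hp => hp.1⟩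
  refine ⟨(one_le_div hd0).mpr (by exact_mod_cast hdk), _, tree_to_acyclic hE hd hdk hc⟩

end Aux

/-- `χ⃗*(G) ≤ va*(G)` for every simple graph `G`. -/
theorem stmt17 {V : Type*} [Fintype V] [DecidableEq V] [Nonempty V]
    (G : SimpleGraph V) :
    starDichromaticGraph G ≤ circularVertexArboricity G := by
  classical
  set k := Fintype.card V with hkdef
  have hk : 0 < k := Fintype.card_pos
  haveI : NeZero k := ⟨by omega⟩
  set c0 : V → ZMod k := fun v => (((Fintype.equivFin V) v : ℕ) : ZMod k) with hc0def
  have hc0inj : Function.Injective c0 := by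
    intro u v h
    have h' := congrArg ZMod.val h
    simp only [hc0def] at h'
    rw [ZMod.val_cast_of_lt (Fin.is_lt _), ZMod.val_cast_of_lt (Fin.is_lt _)] at h'
    exact (Fintype.equivFin V).injective (Fin.ext h')
  have hc0 : IsTreeColouring G k 1 c0 := by
    intro i v l hcyc hall
    obtain ⟨hlen, hnd, _⟩ := hcyc
    match l with
    | [] => simp at hlen
    | w :: l' =>
      have hv : c0 v ∈ cycInterval k i 1 := hall v (by simp)
      have hw : c0 w ∈ cycInterval k i 1 := hall w (by simp)
      obtain ⟨t1, ht1, he1⟩ := hv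
      obtain ⟨t2, ht2, he2⟩ := hw
      have ht1' : t1 = 0 := by omega
      have ht2' : t2 = 0 := by omega
      subst ht1' ht2'
      have hvw : c0 v = c0 w := by rw [he1, he2]
      have := hc0inj hvw
      simp only [List.nodup_cons, List.mem_cons] at hnd
      exact hnd.1 (Or.inl this)
  have hTne : Set.Nonempty {r : ℝ | ∃ k' d' : ℕ, 1 ≤ d' ∧ d' ≤ k' ∧
      (∃ c : V → ZMod k', IsTreeColouring G k' d' c) ∧ r = (k' : ℝ) / d'} :=
    ⟨(k : ℝ) / 1, k, 1, le_refl 1, hk, ⟨c0, hc0⟩, by norm_num⟩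
  have hInf1 : 1 ≤ circularVertexArboricity G := by
    apply le_csInf hTne
    rintro r ⟨k', d', hd', hdk', _, rfl⟩
    have hd0 : (0 : ℝ) < d' := by exact_mod_cast hd'
    exact (one_le_div hd0).mpr (by exact_mod_cast hdk')
  apply Real.sSup_le
  · rintro r ⟨E, hE, rfl⟩
    apply le_csInf hTne
    rintro r ⟨k', d', hd', hdk', ⟨c, hc⟩, rfl⟩
    exact starDichromatic_le hE hd' hdk' hc
  · linarith
end
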